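/- arXiv:0902.3783 — 5 statements merged into one kernel-verified Lean document; each statement's English description precedes it below -/
import Mathlib

section
/- The expected number of nontrivial returns of a Dyck path of length 2n equals (2n-2)/(n+2). -/
open Finset
open scoped Classical

/-- number of up-steps among the first `m` steps of `p` (`true` = up-step `(1,1)`). -/
def upCount {N : ℕ} (p : Fin N → Bool) (m : ℕ) : ℕ :=
  (Finset.univ.filter fun i : Fin N => (i : ℕ) < m ∧ p i = true).card

/-- number of down-steps among the first `m` steps of `p` (`false` = down-step `(1,-1)`). -/
def downCount {N : ℕ} (p : Fin N → Bool) (m : ℕ) : ℕ :=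
  (Finset.univ.filter fun i : Fin N => (i : ℕ) < m ∧ p i = false).card

/-- `p` is a Dyck path: it stays weakly above the x-axis and ends on the x-axis. -/
def IsDyck {N : ℕ} (p : Fin N → Bool) : Prop :=
  (∀ m : ℕ, downCount p m ≤ upCount p m) ∧ upCount p N = downCount p N

/-- Dyck paths of length `2n`. -/
noncomputable def dyckPaths (n : ℕ) : Finset (Fin (2 * n) → Bool) :=
  Finset.univ.filter fun p => IsDyck p

/-- number of nontrivial returns of `p`: interior points where the path meets the x-axis. -/
def returns {N : ℕ} (p : Fin N → Bool) : ℕ :=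
  ((Finset.Ioo 0 N).filter fun m => upCount p m = downCount p m).card

/-! ### Bridge between `Fin N → Bool` counting and list counting -/

lemma count_bridge {N : ℕ} (p : Fin N → Bool) (b : Bool) (m : ℕ) :
    (Finset.univ.filter fun i : Fin N => (i : ℕ) < m ∧ p i = b).card
      = ((List.ofFn p).take m).count b := by
  induction m with
  | zero => simp
  | succ m ih =>
    by_cases h : m < N
    · rw [List.take_succ]
      have hlen : m < (List.ofFn p).length := by simpa using h
      rw [List.getElem?_eq_getElem hlen]
      have hget : (List.ofFn p)[m] = p ⟨m, h⟩ := by simp [List.getElem_ofFn]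
      rw [List.count_append, hget, ← ih]
      by_cases hp : p ⟨m, h⟩ = b
      · have key : (Finset.univ.filter fun i : Fin N => (i : ℕ) < m + 1 ∧ p i = b)
            = (Finset.univ.filter fun i : Fin N => (i : ℕ) < m ∧ p i = b) ∪ {(⟨m, h⟩ : Fin N)} := by
          ext i
          simp only [Finset.mem_filter, Finset.mem_union, Finset.mem_singleton, Finset.mem_univ,
            true_and]
          constructor
          · rintro ⟨h1, h2⟩
            rcases Nat.lt_succ_iff_lt_or_eq.mp h1 with h1 | h1
            · exact Or.inl ⟨h1, h2⟩
            · exact Or.inr (Fin.ext h1)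
          · rintro (⟨h1, h2⟩ | rfl)
            · exact ⟨Nat.lt_succ_of_lt h1, h2⟩
            · exact ⟨Nat.lt_succ_self m, hp⟩
        have hdisj : Disjoint
            (Finset.univ.filter fun i : Fin N => (i : ℕ) < m ∧ p i = b) {(⟨m, h⟩ : Fin N)} := by
          rw [Finset.disjoint_singleton_right, Finset.mem_filter]
          rintro ⟨-, h1, -⟩
          exact absurd h1 (lt_irrefl m)
        rw [key, Finset.card_union_of_disjoint hdisj, Finset.card_singleton, hp]
        simp
      · have key : (Finset.univ.filter fun i : Fin N => (i : ℕ) < m + 1 ∧ p i = b)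
            = (Finset.univ.filter fun i : Fin N => (i : ℕ) < m ∧ p i = b) := by
          ext i
          simp only [Finset.mem_filter, Finset.mem_univ, true_and]
          constructor
          · rintro ⟨h1, h2⟩
            rcases Nat.lt_succ_iff_lt_or_eq.mp h1 with h1 | h1
            · exact ⟨h1, h2⟩
            · exact absurd h2 (by rw [show i = ⟨m, h⟩ from Fin.ext h1]; exact hp)
          · rintro ⟨h1, h2⟩
            exact ⟨Nat.lt_succ_of_lt h1, h2⟩
        rw [key]
        have h0 : List.count b (some (p ⟨m, h⟩)).toList = 0 := by
          simp [List.count_singleton', hp]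
        rw [h0, Nat.add_zero]
    · have hle : (List.ofFn p).length ≤ m := by
        rw [List.length_ofFn]
        omega
      have h1 : (List.ofFn p).take (m+1) = (List.ofFn p).take m := by
        rw [List.take_of_length_le hle, List.take_of_length_le (le_trans hle (Nat.le_succ m))]
      rw [h1, ← ih]
      congr 1
      ext i
      simp only [Finset.mem_filter, Finset.mem_univ, true_and]
      have := i.isLt
      constructor <;> rintro ⟨h1, h2⟩ <;> exact ⟨by omega, h2⟩

lemma upCount_eq_count {N : ℕ} (p : Fin N → Bool) (m : ℕ) :
    upCount p m = ((List.ofFn p).take m).count true := count_bridge p true m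
lemma downCount_eq_count {N : ℕ} (p : Fin N → Bool) (m : ℕ) :
    downCount p m = ((List.ofFn p).take m).count false := count_bridge p false m

/-- Dyck condition on a list of booleans. -/
def ListDyck (l : List Bool) : Prop :=
  (∀ m : ℕ, (l.take m).count false ≤ (l.take m).count true) ∧
    l.count true = l.count false

lemma isDyck_iff {N : ℕ} (p : Fin N → Bool) : IsDyck p ↔ ListDyck (List.ofFn p) := by
  have hl : List.ofFn p = (List.ofFn p).take N := by
    rw [List.take_of_length_le]; simp
  constructor
  · rintro ⟨h1, h2⟩
    refine ⟨fun m => ?_, ?_⟩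
    · rw [← upCount_eq_count, ← downCount_eq_count]; exact h1 m
    · rw [hl, ← upCount_eq_count, ← downCount_eq_count]; exact h2
  · rintro ⟨h1, h2⟩
    refine ⟨fun m => ?_, ?_⟩
    · rw [upCount_eq_count, downCount_eq_count]; exact h1 m
    · rw [upCount_eq_count, downCount_eq_count, ← hl]; exact h2

lemma mem_dyckPaths {n : ℕ} {p : Fin (2 * n) → Bool} :
    p ∈ dyckPaths n ↔ ListDyck (List.ofFn p) := by
  simp [dyckPaths, isDyck_iff]

/-! ### Equivalence with Mathlib's `DyckWord`s -/

open DyckStep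

def toStep : Bool → DyckStep := fun b => bif b then U else D
def stepBool : DyckStep → Bool := fun s => match s with | U => true | D => false

lemma toStep_injective : Function.Injective toStep := by
  intro a b h; cases a <;> cases b <;> simp [toStep] at h ⊢
lemma stepBool_injective : Function.Injective stepBool := by
  intro a b h; cases a <;> cases b <;> simp [stepBool] at h ⊢

@[simp] lemma toStep_stepBool (s : DyckStep) : toStep (stepBool s) = s := by cases s <;> rfl
@[simp] lemma stepBool_toStep (b : Bool) : stepBool (toStep b) = b := by cases b <;> rfl

lemma count_map_U (l : List Bool) : (l.map toStep).count U = l.count true :=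
  List.count_map_of_injective l toStep toStep_injective true
lemma count_map_D (l : List Bool) : (l.map toStep).count D = l.count false :=
  List.count_map_of_injective l toStep toStep_injective false
lemma count_map_true (l : List DyckStep) : (l.map stepBool).count true = l.count U :=
  List.count_map_of_injective l stepBool stepBool_injective U
lemma count_map_false (l : List DyckStep) : (l.map stepBool).count false = l.count D :=
  List.count_map_of_injective l stepBool stepBool_injective D

lemma count_true_add_count_false (l : List Bool) : l.count true + l.count false = l.length := by
  induction l with
  | nil => rfl
  | cons a l ih => cases a <;> simp [List.count_cons, ih] <;> omega

def toDyckWord (l : List Bool) (h : ListDyck l) : DyckWord where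
  toList := l.map toStep
  count_U_eq_count_D := by rw [count_map_U, count_map_D]; exact h.2
  count_D_le_count_U i := by
    rw [← List.map_take, count_map_U, count_map_D]; exact h.1 i

lemma semilength_toDyckWord {n : ℕ} (l : List Bool) (h : ListDyck l) (hl : l.length = 2 * n) :
    (toDyckWord l h).semilength = n := by
  have := count_true_add_count_false l
  have h2 := h.2
  simp only [DyckWord.semilength, toDyckWord, count_map_U]
  omega

lemma dyckWord_length {n : ℕ} (w : DyckWord) (hw : w.semilength = n) :
    w.toList.length = 2 * n := by
  rw [← w.two_mul_semilength_eq_length, hw]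

def ofDyckWord {n : ℕ} (w : DyckWord) (hw : w.semilength = n) : Fin (2 * n) → Bool :=
  fun i => stepBool (w.toList.get ⟨i, by rw [dyckWord_length w hw]; exact i.isLt⟩)

lemma ofFn_ofDyckWord {n : ℕ} (w : DyckWord) (hw : w.semilength = n) :
    List.ofFn (ofDyckWord w hw) = w.toList.map stepBool := by
  apply List.ext_getElem
  · simp [dyckWord_length w hw]
  · intro i h1 h2
    simp [ofDyckWord, List.getElem_ofFn]

lemma listDyck_ofDyckWord {n : ℕ} (w : DyckWord) (hw : w.semilength = n) :
    ListDyck (List.ofFn (ofDyckWord w hw)) := by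
  rw [ofFn_ofDyckWord]
  refine ⟨fun m => ?_, ?_⟩
  · rw [← List.map_take, count_map_true, count_map_false]
    exact w.count_D_le_count_U m
  · rw [count_map_true, count_map_false]
    exact w.count_U_eq_count_D

noncomputable def dyckEquiv (n : ℕ) :
    { p : Fin (2 * n) → Bool // ListDyck (List.ofFn p) } ≃
      { w : DyckWord // w.semilength = n } where
  toFun p := ⟨toDyckWord _ p.2, semilength_toDyckWord _ p.2 (by simp)⟩
  invFun w := ⟨ofDyckWord w.1 w.2, listDyck_ofDyckWord w.1 w.2⟩
  left_inv p := by
    ext i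
    simp [ofDyckWord, toDyckWord, List.get_eq_getElem, List.getElem_map, List.getElem_ofFn]
  right_inv w := by
    ext1
    ext1
    show (List.ofFn (ofDyckWord w.1 w.2)).map toStep = _
    rw [ofFn_ofDyckWord, List.map_map]
    have : toStep ∘ stepBool = id := funext toStep_stepBool
    rw [this, List.map_id]

lemma card_dyckPaths (n : ℕ) : (dyckPaths n).card = catalan n := by
  have h1 : Fintype.card { p : Fin (2 * n) → Bool // IsDyck p } = catalan n := by
    rw [Fintype.card_congr ((Equiv.subtypeEquivRight (fun p => isDyck_iff p)).trans (dyckEquiv n)),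
      DyckWord.card_dyckWord_semilength_eq_catalan]
  rw [← h1, dyckPaths, Fintype.card_subtype]

/-! ### Splitting a Dyck path at a return -/

lemma listDyck_append {l1 l2 : List Bool} (h1 : ListDyck l1) (h2 : ListDyck l2) :
    ListDyck (l1 ++ l2) := by
  refine ⟨fun m => ?_, ?_⟩
  · rw [List.take_append, List.count_append, List.count_append]
    exact Nat.add_le_add (h1.1 m) (h2.1 _)
  · rw [List.count_append, List.count_append, h1.2, h2.2]

lemma listDyck_take {l : List Bool} (h : ListDyck l) {k : ℕ}
    (hk : (l.take k).count true = (l.take k).count false) : ListDyck (l.take k) := by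
  refine ⟨fun m => ?_, hk⟩
  rw [List.take_take]
  exact h.1 _

lemma count_drop_take (l : List Bool) (k m : ℕ) (b : Bool) :
    (l.take k).count b + ((l.drop k).take m).count b = (l.take (k + m)).count b := by
  rw [List.take_add, List.count_append]

lemma listDyck_drop {l : List Bool} (h : ListDyck l) {k : ℕ}
    (hk : (l.take k).count true = (l.take k).count false) : ListDyck (l.drop k) := by
  refine ⟨fun m => ?_, ?_⟩
  · have e1 := count_drop_take l k m true
    have e2 := count_drop_take l k m false
    have := h.1 (k + m)
    omega
  · have e1 : l.count true = (l.take k).count true + (l.drop k).count true := by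
      conv_lhs => rw [← List.take_append_drop k l]
      rw [List.count_append]
    have e2 : l.count false = (l.take k).count false + (l.drop k).count false := by
      conv_lhs => rw [← List.take_append_drop k l]
      rw [List.count_append]
    have := h.2
    omega

lemma touch_even {l : List Bool} (m : ℕ) (hm : m ≤ l.length)
    (ht : (l.take m).count true = (l.take m).count false) :
    m = 2 * (l.take m).count true := by
  have := count_true_add_count_false (l.take m)
  rw [List.length_take] at this
  omega

section maps
variable {n j : ℕ}

def splitL (j n : ℕ) (hj : j ≤ n) (p : Fin (2 * n) → Bool) : Fin (2 * j) → Bool :=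
  fun i => p ⟨i, by have := i.isLt; omega⟩

def splitR (j n : ℕ) (hj : j ≤ n) (p : Fin (2 * n) → Bool) : Fin (2 * (n - j)) → Bool :=
  fun i => p ⟨2 * j + i, by have := i.isLt; omega⟩

def combine (j n : ℕ) (hj : j ≤ n) (q : Fin (2 * j) → Bool) (r : Fin (2 * (n - j)) → Bool) :
    Fin (2 * n) → Bool :=
  fun i => if h : (i : ℕ) < 2 * j then q ⟨i, h⟩ else r ⟨(i : ℕ) - 2 * j, by have := i.isLt; omega⟩

lemma ofFn_splitL (hj : j ≤ n) (p : Fin (2 * n) → Bool) :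
    List.ofFn (splitL j n hj p) = (List.ofFn p).take (2 * j) := by
  apply List.ext_getElem
  · simp; omega
  · intro i h1 h2
    simp [splitL, List.getElem_ofFn]

lemma ofFn_splitR (hj : j ≤ n) (p : Fin (2 * n) → Bool) :
    List.ofFn (splitR j n hj p) = (List.ofFn p).drop (2 * j) := by
  apply List.ext_getElem
  · simp; omega
  · intro i h1 h2
    simp [splitR, List.getElem_ofFn]

lemma ofFn_combine (hj : j ≤ n) (q : Fin (2 * j) → Bool) (r : Fin (2 * (n - j)) → Bool) :
    List.ofFn (combine j n hj q r) = List.ofFn q ++ List.ofFn r := by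
  apply List.ext_getElem
  · simp; omega
  · intro i h1 h2
    simp only [List.getElem_ofFn, combine]
    by_cases h : i < 2 * j
    · rw [dif_pos h, List.getElem_append_left (by simpa using h)]
      simp
    · rw [dif_neg h, List.getElem_append_right (by simpa using h)]
      simp

lemma combine_split (hj : j ≤ n) (p : Fin (2 * n) → Bool) :
    combine j n hj (splitL j n hj p) (splitR j n hj p) = p := by
  funext i
  simp only [combine, splitL, splitR]
  by_cases h : (i : ℕ) < 2 * j
  · rw [dif_pos h]
  · rw [dif_neg h]
    congr 1
    ext
    simp
    omega

lemma splitL_combine (hj : j ≤ n) (q : Fin (2 * j) → Bool) (r : Fin (2 * (n - j)) → Bool) :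
    splitL j n hj (combine j n hj q r) = q := by
  funext i
  simp only [combine, splitL]
  rw [dif_pos (by simpa using i.isLt)]

lemma splitR_combine (hj : j ≤ n) (q : Fin (2 * j) → Bool) (r : Fin (2 * (n - j)) → Bool) :
    splitR j n hj (combine j n hj q r) = r := by
  funext i
  simp only [combine, splitR]
  rw [dif_neg (by omega)]
  congr 1
  ext
  simp

end maps

lemma card_touch (n j : ℕ) (h0 : 0 < j) (hjn : j < n) :
    ((dyckPaths n).filter fun p => upCount p (2 * j) = downCount p (2 * j)).card
      = catalan j * catalan (n - j) := by
  have hj : j ≤ n := hjn.le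
  rw [← card_dyckPaths, ← card_dyckPaths, ← Finset.card_product]
  apply Finset.card_bij'
    (i := fun p _ => (splitL j n hj p, splitR j n hj p))
    (j := fun qr _ => combine j n hj qr.1 qr.2)
  · rintro p hp
    rw [Finset.mem_filter] at hp
    obtain ⟨hp1, hp2⟩ := hp
    rw [mem_dyckPaths] at hp1
    rw [upCount_eq_count, downCount_eq_count] at hp2
    rw [Finset.mem_product, mem_dyckPaths, mem_dyckPaths, ofFn_splitL, ofFn_splitR]
    exact ⟨listDyck_take hp1 hp2, listDyck_drop hp1 hp2⟩
  · rintro ⟨q, r⟩ hqr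
    rw [Finset.mem_product, mem_dyckPaths, mem_dyckPaths] at hqr
    rw [Finset.mem_filter, mem_dyckPaths, ofFn_combine, upCount_eq_count, downCount_eq_count,
      ofFn_combine]
    refine ⟨listDyck_append hqr.1 hqr.2, ?_⟩
    have hlen : (List.ofFn q).length = 2 * j := by simp
    rw [List.take_left' hlen]
    exact hqr.1.2
  · intro p _
    exact combine_split hj p
  · rintro ⟨q, r⟩ _
    exact Prod.ext (splitL_combine hj q r) (splitR_combine hj q r)

lemma sum_returns (n : ℕ) :
    ∑ p ∈ dyckPaths n, returns p = ∑ j ∈ Finset.Ioo 0 n, catalan j * catalan (n - j) := by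
  have step1 : ∑ p ∈ dyckPaths n, returns p
      = ∑ m ∈ Finset.Ioo 0 (2 * n),
          ((dyckPaths n).filter fun p => upCount p m = downCount p m).card := by
    simp_rw [returns, Finset.card_filter]
    rw [Finset.sum_comm]
  rw [step1]
  have hvanish : ∀ m ∈ Finset.Ioo 0 (2 * n),
      m ∉ (Finset.Ioo 0 n).image (fun j => 2 * j) →
      ((dyckPaths n).filter fun p => upCount p m = downCount p m).card = 0 := by
    intro m hm hnot
    rw [Finset.mem_Ioo] at hm
    rw [Finset.card_eq_zero, Finset.eq_empty_iff_forall_notMem]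
    intro p hp
    rw [Finset.mem_filter] at hp
    obtain ⟨hp1, hp2⟩ := hp
    rw [mem_dyckPaths] at hp1
    rw [upCount_eq_count, downCount_eq_count] at hp2
    have hm2 : m ≤ (List.ofFn p).length := by simp; omega
    have := touch_even m hm2 hp2
    apply hnot
    rw [Finset.mem_image]
    exact ⟨((List.ofFn p).take m).count true, by rw [Finset.mem_Ioo]; omega, by omega⟩
  rw [← Finset.sum_subset (fun m hm => ?_) hvanish]
  · rw [Finset.sum_image (fun a _ b _ h => by omega)]
    apply Finset.sum_congr rfl
    intro j hj
    rw [Finset.mem_Ioo] at hj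
    exact card_touch n j hj.1 hj.2
  · rw [Finset.mem_image] at hm
    obtain ⟨j, hj, rfl⟩ := hm
    rw [Finset.mem_Ioo] at hj ⊢
    omega

lemma catalan_ident (n : ℕ) (hn : 1 ≤ n) :
    (∑ j ∈ Finset.Ioo 0 n, catalan j * catalan (n - j)) + 2 * catalan n = catalan (n + 1) := by
  obtain ⟨m, rfl⟩ : ∃ m, n = m + 1 := ⟨n - 1, by omega⟩
  rw [catalan_succ (m + 1),
    Fin.sum_univ_eq_sum_range (fun i => catalan i * catalan (m + 1 - i)) (m + 2),
    Finset.sum_range_succ, Finset.sum_range_succ']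
  rw [show Finset.Ioo 0 (m + 1) = Finset.Ico 1 (m + 1) by ext x; simp; omega,
    Finset.sum_Ico_eq_sum_range]
  have he : ∀ i ∈ Finset.range (m + 1 - 1), catalan (1 + i) * catalan (m + 1 - (1 + i))
      = catalan (i + 1) * catalan (m - i) := by
    intro i hi
    rw [Nat.add_comm 1 i]
    congr 2
    omega
  rw [Finset.sum_congr rfl he]
  simp [catalan_zero]
  omega

/-- The expected number of nontrivial returns of a uniformly random Dyck path of length `2n`
equals `(2n-2)/(n+2)`. -/
theorem expected_nontrivial_returns_dyck (n : ℕ) (hn : 1 ≤ n) :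
    (∑ p ∈ dyckPaths n, (returns p : ℚ)) / ((dyckPaths n).card : ℚ)
      = (2 * (n : ℚ) - 2) / ((n : ℚ) + 2) := by
  have hsum : (∑ p ∈ dyckPaths n, returns p) + 2 * catalan n = catalan (n + 1) := by
    rw [sum_returns]; exact catalan_ident n hn
  have hcard := card_dyckPaths n
  have hCn : 0 < catalan n := by
    rcases Nat.eq_zero_or_pos (catalan n) with h | h
    · exfalso
      have := succ_mul_catalan_eq_centralBinom n
      rw [h, Nat.mul_zero] at this
      exact absurd this.symm (Nat.centralBinom_pos n).ne'
    · exact h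
  have hC : (0 : ℚ) < (catalan n : ℚ) := by exact_mod_cast hCn
  have h1 : ((n : ℚ) + 1) * catalan n = Nat.centralBinom n := by
    exact_mod_cast congrArg (Nat.cast : ℕ → ℚ) (succ_mul_catalan_eq_centralBinom n)
  have h2 : ((n : ℚ) + 2) * catalan (n + 1) = Nat.centralBinom (n + 1) := by
    have := congrArg (Nat.cast : ℕ → ℚ) (succ_mul_catalan_eq_centralBinom (n + 1))
    push_cast at this ⊢
    linarith
  have h3 : ((n : ℚ) + 1) * Nat.centralBinom (n + 1) = 2 * (2 * n + 1) * Nat.centralBinom n := by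
    have := congrArg (Nat.cast : ℕ → ℚ) (Nat.succ_mul_centralBinom_succ n)
    push_cast at this ⊢
    linarith
  have key : ((n : ℚ) + 2) * catalan (n + 1) = 2 * (2 * n + 1) * catalan n := by
    have hne : ((n : ℚ) + 1) ≠ 0 := by positivity
    apply mul_left_cancel₀ hne
    linear_combination ((n : ℚ) + 1) * h2 + h3 - (2 * (2 * (n : ℚ) + 1)) * h1
  have hTQ : (∑ p ∈ dyckPaths n, (returns p : ℚ)) = (catalan (n + 1) : ℚ) - 2 * catalan n := by
    have := congrArg (Nat.cast : ℕ → ℚ) hsum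
    push_cast at this
    linarith
  rw [hTQ, hcard]
  rw [div_eq_div_iff hC.ne' (by positivity : ((n : ℚ) + 2) ≠ 0)]
  linear_combination key
end

section
/- The number of Dyck paths of length 2n with exactly j nontrivial returns equals ((j+1)/(2n-j-1)) * binom(2n-j-1, n). -/
open Finset
open scoped Classical

/-! ### Auxiliary: counting lemmas for `snoc` -/

lemma count_snoc {N : ℕ} (q : Fin N → Bool) (b c : Bool) (m : ℕ) :
    (Finset.univ.filter fun i : Fin (N+1) => (i : ℕ) < m ∧ (Fin.snoc q b : Fin (N+1) → Bool) i = c).card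
      = (Finset.univ.filter fun i : Fin N => (i : ℕ) < m ∧ q i = c).card
        + (if N < m ∧ b = c then 1 else 0) := by
  classical
  have key : ((univ.map Fin.castSuccEmb).filter
        (fun j : Fin (N+1) => (j : ℕ) < m ∧ (Fin.snoc q b : Fin (N+1) → Bool) j = c)).card
      = (Finset.univ.filter fun i : Fin N => (i : ℕ) < m ∧ q i = c).card := by
    rw [filter_map, card_map]
    apply congrArg
    apply filter_congr
    intro i _
    have h3 : ((fun j : Fin (N+1) => (j : ℕ) < m ∧ (Fin.snoc q b : Fin (N+1) → Bool) j = c) ∘ Fin.castSuccEmb) i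
        = ((i.castSucc : ℕ) < m ∧ (Fin.snoc q b : Fin (N+1) → Bool) i.castSucc = c) := rfl
    rw [h3, Fin.snoc_castSucc, Fin.coe_castSucc]
  rw [Fin.univ_castSuccEmb, filter_cons]
  by_cases h : N < m ∧ b = c
  · rw [if_pos (by simpa [Fin.snoc_last] using h), if_pos h, card_cons, key, add_comm]
  · rw [if_neg (by simpa [Fin.snoc_last] using h), if_neg h, key, add_zero]

lemma upCount_snoc {N : ℕ} (q : Fin N → Bool) (b : Bool) (m : ℕ) :
    upCount (Fin.snoc q b : Fin (N+1) → Bool) m = upCount q m + (if N < m ∧ b = true then 1 else 0) :=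
  count_snoc q b true m

lemma downCount_snoc {N : ℕ} (q : Fin N → Bool) (b : Bool) (m : ℕ) :
    downCount (Fin.snoc q b : Fin (N+1) → Bool) m = downCount q m + (if N < m ∧ b = false then 1 else 0) :=
  count_snoc q b false m

lemma count_stab {N : ℕ} (p : Fin N → Bool) (c : Bool) {m : ℕ} (h : N ≤ m) :
    (Finset.univ.filter fun i : Fin N => (i : ℕ) < m ∧ p i = c).card
      = (Finset.univ.filter fun i : Fin N => (i : ℕ) < N ∧ p i = c).card := by
  apply congrArg
  apply filter_congr
  intro i _
  simp [i.isLt, lt_of_lt_of_le i.isLt h]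

lemma upCount_stab {N : ℕ} (p : Fin N → Bool) {m : ℕ} (h : N ≤ m) :
    upCount p m = upCount p N := count_stab p true h

lemma downCount_stab {N : ℕ} (p : Fin N → Bool) {m : ℕ} (h : N ≤ m) :
    downCount p m = downCount p N := count_stab p false h

lemma returns_snoc {N : ℕ} (q : Fin N → Bool) (b : Bool) :
    returns (Fin.snoc q b : Fin (N+1) → Bool)
      = returns q + (if 0 < N ∧ upCount q N = downCount q N then 1 else 0) := by
  classical
  unfold returns
  have hcong : ((Finset.Ioo 0 (N+1)).filter fun m =>
      upCount (Fin.snoc q b : Fin (N+1) → Bool) m = downCount (Fin.snoc q b : Fin (N+1) → Bool) m)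
      = ((Finset.Ioo 0 (N+1)).filter fun m => upCount q m = downCount q m) := by
    apply filter_congr
    intro m hm
    have hmN : ¬ (N < m ∧ b = true) ∧ ¬ (N < m ∧ b = false) := by
      have := (Finset.mem_Ioo.mp hm).2
      constructor <;> rintro ⟨h1, -⟩ <;> omega
    rw [upCount_snoc, downCount_snoc, if_neg hmN.1, if_neg hmN.2, add_zero, add_zero]
  rw [hcong]
  rcases Nat.eq_zero_or_pos N with hN | hN
  · subst hN
    simp only [returns, Nat.add_eq, Nat.zero_add]
    rw [if_neg (by omega)]
    have : Finset.Ioo 0 1 = (∅ : Finset ℕ) := by decide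
    rw [this]
    simp
  · have hIoo : Finset.Ioo 0 (N+1) = insert N (Finset.Ioo 0 N) := by
      ext x; simp [Finset.mem_Ioo]; omega
    rw [hIoo, filter_insert]
    by_cases hc : upCount q N = downCount q N
    · rw [if_pos hc, if_pos ⟨hN, hc⟩, card_insert_of_notMem]
      intro hmem
      have := Finset.mem_Ioo.mp (Finset.mem_of_mem_filter _ hmem)
      omega
    · rw [if_neg hc, if_neg (by tauto)]
      simp

/-! ### The refined counting function -/

noncomputable def Good (N h k : ℕ) : Finset (Fin N → Bool) :=
  Finset.univ.filter fun p =>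
    (∀ m : ℕ, downCount p m ≤ upCount p m) ∧ upCount p N = downCount p N + h ∧ returns p = k

noncomputable def F (N h k : ℕ) : ℕ := (Good N h k).card

lemma F_zero (h k : ℕ) : F 0 h k = if h = 0 ∧ k = 0 then 1 else 0 := by
  classical
  unfold F Good
  have huniv : (Finset.univ : Finset (Fin 0 → Bool)) = {fun i => i.elim0} := by
    ext p
    simp only [Finset.mem_univ, Finset.mem_singleton, true_iff]
    funext i
    exact i.elim0
  have hup : ∀ m, upCount (fun i : Fin 0 => i.elim0) m = 0 := by
    intro m; simp [upCount]
  have hdown : ∀ m, downCount (fun i : Fin 0 => i.elim0) m = 0 := by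
    intro m; simp [downCount]
  have hret : returns (fun i : Fin 0 => i.elim0) = 0 := by simp [returns]
  rw [huniv, filter_singleton]
  by_cases hc : h = 0 ∧ k = 0
  · rw [if_pos, if_pos hc, card_singleton]
    refine ⟨fun m => by simp [hup, hdown], by simp [hup, hdown, hc.1], by simp [hret, hc.2]⟩
  · rw [if_neg, if_neg hc]
    · simp
    · rintro ⟨-, h2, h3⟩
      rw [hup, hdown, hret] at *
      simp [hup 0, hdown 0] at h2
      exact hc ⟨by omega, by omega⟩

lemma nonneg_snoc_iff {N : ℕ} (q : Fin N → Bool) (b : Bool) :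
    (∀ m : ℕ, downCount (Fin.snoc q b : Fin (N+1) → Bool) m
        ≤ upCount (Fin.snoc q b : Fin (N+1) → Bool) m)
      ↔ ((∀ m : ℕ, downCount q m ≤ upCount q m) ∧
          downCount q N + (if b then 0 else 1) ≤ upCount q N + (if b then 1 else 0)) := by
  constructor
  · intro H
    constructor
    · intro m
      rcases le_or_gt m N with hm | hm
      · have := H m
        rw [upCount_snoc, downCount_snoc, if_neg (by omega), if_neg (by omega)] at this
        omega
      · calc downCount q m = downCount q N := downCount_stab q (by omega)
          _ ≤ upCount q N := by
              have := H N
              rw [upCount_snoc, downCount_snoc, if_neg (by omega), if_neg (by omega)] at this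
              omega
          _ = upCount q m := (upCount_stab q (by omega)).symm
    · have := H (N+1)
      rw [upCount_snoc, downCount_snoc, upCount_stab q (by omega), downCount_stab q (by omega)] at this
      cases b <;> simpa using this
  · rintro ⟨H1, H2⟩ m
    rcases le_or_gt m N with hm | hm
    · rw [upCount_snoc, downCount_snoc, if_neg (by omega), if_neg (by omega)]
      exact H1 m
    · rw [upCount_snoc, downCount_snoc,
        upCount_stab q (show N ≤ m by omega), downCount_stab q (show N ≤ m by omega)]
      cases b
      · rw [if_pos ⟨hm, rfl⟩, if_neg (by simp)]
        simpa using H2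
      · rw [if_neg (by simp), if_pos ⟨hm, rfl⟩]
        simpa using H2

lemma card_filter_snoc_split {N : ℕ} (P : (Fin (N+1) → Bool) → Prop) [DecidablePred P]
    [DecidablePred fun q : Fin N → Bool => P (Fin.snoc q true)]
    [DecidablePred fun q : Fin N → Bool => P (Fin.snoc q false)] :
    (Finset.univ.filter P).card
      = (Finset.univ.filter fun q : Fin N → Bool => P (Fin.snoc q true)).card
        + (Finset.univ.filter fun q : Fin N → Bool => P (Fin.snoc q false)).card := by
  classical
  let e : (Fin N → Bool) × Bool ≃ (Fin (N+1) → Bool) :=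
    { toFun := fun x => Fin.snoc x.1 x.2
      invFun := fun p => (Fin.init p, p (Fin.last N))
      left_inv := fun x => by simp
      right_inv := fun p => by simp }
  rw [card_filter, card_filter, card_filter]
  rw [← Fintype.sum_equiv e (fun x : (Fin N → Bool) × Bool => if P (Fin.snoc x.1 x.2) then 1 else 0)
      (fun p => if P p then 1 else 0) (fun x => rfl)]
  rw [Fintype.sum_prod_type]
  rw [← Finset.sum_add_distrib]
  apply Finset.sum_congr rfl
  intro q _
  rw [Fintype.sum_bool]
  congr 1 <;> congr 1

lemma mem_true_branch {N : ℕ} (h k : ℕ) (q : Fin N → Bool) :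
    ((∀ m : ℕ, downCount (Fin.snoc q true : Fin (N+1) → Bool) m
        ≤ upCount (Fin.snoc q true : Fin (N+1) → Bool) m) ∧
      upCount (Fin.snoc q true : Fin (N+1) → Bool) (N+1)
        = downCount (Fin.snoc q true : Fin (N+1) → Bool) (N+1) + h ∧
      returns (Fin.snoc q true : Fin (N+1) → Bool) = k)
    ↔ ((∀ m : ℕ, downCount q m ≤ upCount q m) ∧ upCount q N + 1 = downCount q N + h ∧
        returns q + (if 0 < N ∧ upCount q N = downCount q N then 1 else 0) = k) := by
  rw [nonneg_snoc_iff, upCount_snoc, downCount_snoc, returns_snoc,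
      upCount_stab q (Nat.le_succ N), downCount_stab q (Nat.le_succ N)]
  rw [if_pos (show N < N + 1 ∧ true = true from ⟨Nat.lt_succ_self N, rfl⟩),
      if_neg (show ¬ (N < N + 1 ∧ true = false) by simp)]
  simp only [Bool.false_eq_true, Bool.true_eq_false, reduceIte, if_false, if_true, add_zero]
  constructor
  · rintro ⟨⟨hq, -⟩, hend, hret⟩
    exact ⟨hq, by omega, hret⟩
  · rintro ⟨hq, hend, hret⟩
    refine ⟨⟨hq, ?_⟩, by omega, hret⟩
    have := hq N
    omega

lemma mem_false_branch {N : ℕ} (h k : ℕ) (q : Fin N → Bool) :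
    ((∀ m : ℕ, downCount (Fin.snoc q false : Fin (N+1) → Bool) m
        ≤ upCount (Fin.snoc q false : Fin (N+1) → Bool) m) ∧
      upCount (Fin.snoc q false : Fin (N+1) → Bool) (N+1)
        = downCount (Fin.snoc q false : Fin (N+1) → Bool) (N+1) + h ∧
      returns (Fin.snoc q false : Fin (N+1) → Bool) = k)
    ↔ ((∀ m : ℕ, downCount q m ≤ upCount q m) ∧ upCount q N = downCount q N + (h+1) ∧
        returns q = k) := by
  rw [nonneg_snoc_iff, upCount_snoc, downCount_snoc, returns_snoc,
      upCount_stab q (Nat.le_succ N), downCount_stab q (Nat.le_succ N)]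
  rw [if_neg (show ¬ (N < N + 1 ∧ false = true) by simp),
      if_pos (show N < N + 1 ∧ false = false from ⟨Nat.lt_succ_self N, rfl⟩)]
  simp only [Bool.false_eq_true, Bool.true_eq_false, reduceIte, if_false, if_true, add_zero]
  constructor
  · rintro ⟨⟨hq, hge⟩, hend, hret⟩
    refine ⟨hq, by omega, ?_⟩
    rwa [if_neg (by omega), add_zero] at hret
  · rintro ⟨hq, hend, hret⟩
    refine ⟨⟨hq, by omega⟩, by omega, ?_⟩
    rw [if_neg (by omega), add_zero]
    exact hret

lemma F_succ (N h k : ℕ) : F (N+1) h k =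
    (if h = 0 then 0
     else if h = 1 ∧ 0 < N then (if k = 0 then 0 else F N 0 (k-1))
     else F N (h-1) k) + F N (h+1) k := by
  classical
  unfold F Good
  rw [card_filter_snoc_split (fun p : Fin (N+1) → Bool =>
    (∀ m : ℕ, downCount p m ≤ upCount p m) ∧ upCount p (N+1) = downCount p (N+1) + h ∧ returns p = k)]
  congr 1
  · -- true branch
    by_cases h0 : h = 0
    · subst h0
      rw [if_pos rfl, Finset.card_eq_zero, Finset.filter_eq_empty_iff]
      intro q _
      rw [mem_true_branch]
      rintro ⟨h1, h2, -⟩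
      have := h1 N
      omega
    · obtain ⟨h', rfl⟩ : ∃ h'', h = h'' + 1 := ⟨h - 1, by omega⟩
      rw [if_neg h0]
      by_cases hcase : h' + 1 = 1 ∧ 0 < N
      · rw [if_pos hcase]
        have hN : 0 < N := hcase.2
        have h'0 : h' = 0 := by omega
        subst h'0
        by_cases hk : k = 0
        · subst hk
          rw [if_pos rfl, Finset.card_eq_zero, Finset.filter_eq_empty_iff]
          intro q _
          rw [mem_true_branch]
          rintro ⟨h1, h2, h3⟩
          have h4 : upCount q N = downCount q N := by omega
          rw [if_pos ⟨hN, h4⟩] at h3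
          omega
        · rw [if_neg hk]
          apply congrArg
          apply filter_congr
          intro q _
          rw [mem_true_branch]
          constructor
          · rintro ⟨h1, h2, h3⟩
            have h4 : upCount q N = downCount q N := by omega
            rw [if_pos ⟨hN, h4⟩] at h3
            exact ⟨h1, by omega, by omega⟩
          · rintro ⟨h1, h2, h3⟩
            have h4 : upCount q N = downCount q N := by omega
            refine ⟨h1, by omega, ?_⟩
            rw [if_pos ⟨hN, h4⟩]
            omega
      · rw [if_neg hcase]
        apply congrArg
        apply filter_congr
        intro q _
        rw [mem_true_branch]
        have he : h' + 1 - 1 = h' := rfl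
        rw [he]
        constructor
        · rintro ⟨h1, h2, h3⟩
          refine ⟨h1, by omega, ?_⟩
          by_cases hc2 : 0 < N ∧ upCount q N = downCount q N
          · exact absurd ⟨by omega, hc2.1⟩ hcase
          · rw [if_neg hc2] at h3
            omega
        · rintro ⟨h1, h2, h3⟩
          refine ⟨h1, by omega, ?_⟩
          by_cases hc2 : 0 < N ∧ upCount q N = downCount q N
          · exact absurd ⟨by omega, hc2.1⟩ hcase
          · rw [if_neg hc2]
            omega
  · -- false branch
    apply congrArg
    apply filter_congr
    intro q _
    rw [mem_false_branch]

/-! ### Closed form -/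

def Aq (m s : ℕ) : ℚ :=
  ((2*m + s - 1).choose m : ℚ) - ((2*m + s - 1).choose (m + s) : ℚ)

lemma Aq_right_zero (m : ℕ) : Aq m 0 = 0 := by
  simp [Aq]

lemma Aq_left_zero (s : ℕ) : Aq 0 (s+1) = 1 := by
  unfold Aq
  rw [show 2*0 + (s+1) - 1 = s from by omega]
  rw [Nat.choose_zero_right, Nat.choose_eq_zero_of_lt (show s < 0 + (s+1) from by omega)]
  norm_num

lemma Aq_key (m s : ℕ) : Aq (m+1) (s+1) = Aq m (s+2) + Aq (m+1) s := by
  unfold Aq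
  rw [show 2*(m+1) + (s+1) - 1 = (2*m+s+1)+1 from by omega,
      show 2*m + (s+2) - 1 = 2*m+s+1 from by omega,
      show 2*(m+1) + s - 1 = 2*m+s+1 from by omega,
      show m+1+(s+1) = (m+s+1)+1 from by omega,
      Nat.choose_succ_succ (2*m+s+1) m,
      Nat.choose_succ_succ (2*m+s+1) (m+s+1)]
  push_cast
  have e1 : m + (s+2) = (m+s+1)+1 := by omega
  have e2 : m + 1 + s = m+s+1 := by omega
  rw [e1, e2]
  ring

def Gpos (N h k : ℕ) : ℚ :=
  if 2*k + h ≤ N ∧ (N - h) % 2 = 0 then Aq ((N - (2*k+h))/2) (k+h) else 0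

noncomputable def G (N h k : ℕ) : ℚ :=
  if h = 0 then (if N = 0 then (if k = 0 then 1 else 0) else Gpos (N-1) 1 k)
  else Gpos N h k

lemma G_eq_Gpos (N h k : ℕ) (hh : h ≠ 0) : G N h k = Gpos N h k := if_neg hh

lemma G_zero_eq (N k : ℕ) (hN : N ≠ 0) : G N 0 k = Gpos (N-1) 1 k := by
  unfold G
  rw [if_pos rfl, if_neg hN]

lemma G_zero_zero (k : ℕ) : G 0 0 k = if k = 0 then 1 else 0 := by
  unfold G
  simp

lemma Gpos_key (N h k : ℕ) (hcond : 1 ≤ k + h ∨ 1 ≤ N) :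
    Gpos (N+1) (h+1) k = Gpos N h k + Gpos N (h+2) k := by
  unfold Gpos
  rcases lt_or_ge N (2*k + h) with hb | hb
  · rw [if_neg (by omega), if_neg (by omega), if_neg (by omega)]
    norm_num
  · by_cases hpar : (N - h) % 2 = 0
    · obtain ⟨m, hN⟩ : ∃ m, N = 2*m + 2*k + h := ⟨(N - (2*k+h))/2, by omega⟩
      rw [if_pos (by omega), if_pos (by omega)]
      rw [show (N+1 - (2*k+(h+1)))/2 = m from by omega,
          show (N - (2*k+h))/2 = m from by omega]
      rcases Nat.eq_zero_or_pos m with hm0 | hm0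
      · rw [if_neg (by omega)]
        have hkh : 1 ≤ k + h := by omega
        obtain ⟨t, ht⟩ : ∃ t, k + h = t + 1 := ⟨k + h - 1, by omega⟩
        rw [show k + (h+1) = (k + h) + 1 from by omega, hm0, ht, Aq_left_zero, Aq_left_zero]
        norm_num
      · obtain ⟨m', rfl⟩ : ∃ m', m = m' + 1 := ⟨m - 1, by omega⟩
        rw [if_pos (by omega)]
        rw [show (N - (2*k+(h+2)))/2 = m' from by omega,
            show k + (h+1) = (k+h) + 1 from by omega,
            show k + (h+2) = (k+h) + 2 from by omega]
        rw [Aq_key m' (k+h)]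
        ring
    · rw [if_neg (by omega), if_neg (by omega), if_neg (by omega)]
      norm_num

lemma Gpos_h0 (N k' : ℕ) (hN : 1 ≤ N) : Gpos N 0 (k'+1) = Gpos (N-1) 1 k' := by
  unfold Gpos
  by_cases hc : 2*(k'+1) + 0 ≤ N ∧ (N - 0) % 2 = 0
  · rw [if_pos hc, if_pos (by omega)]
    rw [show (N - 1 - (2*k'+1))/2 = (N - (2*(k'+1)+0))/2 from by omega,
        show k' + 1 + 0 = k' + 1 from by omega]
  · rw [if_neg hc, if_neg (by omega)]

lemma Gpos_eval_pos (N h k : ℕ) (hc : 2*k + h ≤ N ∧ (N - h) % 2 = 0) :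
    Gpos N h k = Aq ((N - (2*k+h))/2) (k+h) := if_pos hc

lemma Gpos_eval_neg (N h k : ℕ) (hc : ¬(2*k + h ≤ N ∧ (N - h) % 2 = 0)) :
    Gpos N h k = 0 := if_neg hc

lemma Gpos_h0_zero (N : ℕ) : Gpos N 0 0 = 0 := by
  unfold Gpos
  split_ifs with h
  · rw [show (0:ℕ) + 0 = 0 from rfl, Aq_right_zero]
  · rfl

lemma G_succ (N h k : ℕ) : G (N+1) h k =
    (if h = 0 then 0
     else if h = 1 ∧ 0 < N then (if k = 0 then 0 else G N 0 (k-1))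
     else G N (h-1) k) + G N (h+1) k := by
  by_cases h0 : h = 0
  · subst h0
    rw [if_pos rfl, G_zero_eq (N+1) k (by omega), G_eq_Gpos N 1 k (by omega)]
    simp
  · obtain ⟨h1, rfl⟩ : ∃ hh, h = hh + 1 := ⟨h - 1, by omega⟩
    rw [if_neg h0, G_eq_Gpos (N+1) (h1+1) k h0]
    by_cases hcase : h1 + 1 = 1 ∧ 0 < N
    · have h10 : h1 = 0 := by omega
      subst h10
      have hN : 0 < N := hcase.2
      rw [if_pos hcase, G_eq_Gpos N (0+1+1) k (by omega)]
      rcases Nat.eq_zero_or_pos k with hk | hk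
      · subst hk
        rw [if_pos rfl, Gpos_key N 0 0 (Or.inr hN), Gpos_h0_zero]
      · obtain ⟨k1, rfl⟩ : ∃ kk, k = kk + 1 := ⟨k - 1, by omega⟩
        rw [if_neg (by omega), Gpos_key N 0 (k1+1) (Or.inl (by omega)),
            show k1 + 1 - 1 = k1 from rfl, G_zero_eq N k1 (by omega), ← Gpos_h0 N k1 hN]
    · rw [if_neg hcase]
      by_cases hh1 : h1 = 0
      · subst hh1
        have hN0 : N = 0 := by omega
        subst hN0
        rw [show (0:ℕ)+1-1 = 0 from rfl, G_zero_zero, G_eq_Gpos 0 (0+1+1) k (by omega)]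
        rw [Gpos_eval_neg 0 (0+1+1) k (by omega)]
        rcases Nat.eq_zero_or_pos k with hk | hk
        · subst hk
          rw [if_pos rfl, Gpos_eval_pos (0+1) (0+1) 0 (by omega)]
          rw [show ((0+1 : ℕ) - (2*0+(0+1)))/2 = 0 from by omega,
              show (0:ℕ) + (0+1) = 0 + 1 from rfl, Aq_left_zero]
          norm_num
        · rw [if_neg (by omega), Gpos_eval_neg (0+1) (0+1) k (by omega)]
          norm_num
      · obtain ⟨h2, rfl⟩ : ∃ hhh, h1 = hhh + 1 := ⟨h1 - 1, by omega⟩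
        rw [G_eq_Gpos N (h2+1+1-1) k (by omega), G_eq_Gpos N (h2+1+1+1) k (by omega)]
        rw [show h2+1+1-1 = h2+1 from rfl]
        exact Gpos_key N (h2+1) k (Or.inl (by omega))

lemma F_eq_G : ∀ (N h k : ℕ), (F N h k : ℚ) = G N h k := by
  intro N
  induction N with
  | zero =>
    intro h k
    rw [F_zero]
    by_cases h0 : h = 0
    · subst h0
      rw [G_zero_zero]
      by_cases hk : k = 0
      · subst hk; norm_num
      · rw [if_neg (by simp [hk]), if_neg hk]; norm_num
    · rw [if_neg (by tauto), G_eq_Gpos 0 h k h0, Gpos_eval_neg 0 h k (by omega)]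
      norm_num
  | succ N ih =>
    intro h k
    rw [F_succ, G_succ]
    split_ifs with c1 c2 c3
    · push_cast
      rw [ih]
    · push_cast
      rw [ih]
    · push_cast
      rw [ih, ih]
    · push_cast
      rw [ih, ih]

/-- The number of Dyck paths of length `2n` with exactly `j` nontrivial returns equals
`((j+1)/(2n-j-1)) * binom(2n-j-1, n)`. -/
theorem dyck_paths_with_j_returns (n j : ℕ) (hn : 1 ≤ n) (hj : j ≤ n - 1) :
    ((((dyckPaths n).filter fun p => returns p = j)).card : ℚ)
      = (((j : ℚ) + 1) / (2 * (n : ℚ) - (j : ℚ) - 1)) * ((2 * n - j - 1).choose n : ℚ) := by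
  have hset : ((dyckPaths n).filter fun p => returns p = j) = Good (2*n) 0 j := by
    ext p
    simp only [dyckPaths, Good, IsDyck, Finset.mem_filter, Finset.mem_univ, true_and, add_zero,
      Finset.filter_filter]
    change (p ∈ Finset.univ.filter fun p => IsDyck p) ∧ _ ↔ _
    rw [Finset.mem_filter]
    simp only [Finset.mem_univ, true_and, IsDyck]
    tauto
  rw [hset]
  rw [show ((Good (2*n) 0 j).card : ℚ) = G (2*n) 0 j from F_eq_G (2*n) 0 j]
  obtain ⟨d, rfl⟩ : ∃ d, n = j + d + 1 := ⟨n - j - 1, by omega⟩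
  rw [G_zero_eq (2*(j+d+1)) j (by omega),
      Gpos_eval_pos (2*(j+d+1)-1) 1 j (by constructor <;> omega)]
  rw [show (2*(j+d+1)-1 - (2*j+1))/2 = d from by omega]
  unfold Aq
  rw [show 2*d + (j+1) - 1 = j + 2*d from by omega, show d + (j+1) = (j+d)+1 from by omega]
  rw [show 2*(j+d+1) - j - 1 = (j+2*d)+1 from by omega]
  have hsymm : (j+2*d).choose d = (j+2*d).choose (j+d) := by
    rw [← Nat.choose_symm (show j+d ≤ j+2*d by omega), show j+2*d - (j+d) = d from by omega]
  have hpasc : ((j+2*d)+1).choose ((j+d)+1)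
      = (j+2*d).choose (j+d) + (j+2*d).choose ((j+d)+1) := Nat.choose_succ_succ _ _
  have hprod : (j+2*d).choose ((j+d)+1) * ((j+d)+1) = (j+2*d).choose (j+d) * d := by
    rw [Nat.choose_succ_right_eq]
    congr 1
    omega
  rw [hsymm, hpasc]
  have hprodQ : ((j+2*d).choose ((j+d)+1) : ℚ) * ((j:ℚ)+(d:ℚ)+1)
      = ((j+2*d).choose (j+d) : ℚ) * (d:ℚ) := by
    exact_mod_cast congrArg (Nat.cast : ℕ → ℚ) hprod
  have hden : 2 * ((j:ℚ)+(d:ℚ)+1) - (j:ℚ) - 1 ≠ 0 := by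
    intro hc
    have : (j:ℚ) + 2*(d:ℚ) + 1 = 0 := by linarith
    have hj0 : (0:ℚ) ≤ (j:ℚ) := Nat.cast_nonneg j
    have hd0 : (0:ℚ) ≤ (d:ℚ) := Nat.cast_nonneg d
    linarith
  push_cast
  field_simp
  ring_nf
  ring_nf at hprodQ
  linarith [hprodQ]
end

section
/- For n >= 1, the sum over j >= 0 of ((j+1)/(2n-j-1)) * binom(2n-j-1, n) equals the Catalan number C_n = (1/(n+1)) binom(2n, n). -/
/-- Per-term identity: for `1 ≤ n ≤ m ≤ 2n`,
`((2n-m)/m) * C(m,n) = (C(m,n) - C(m,n+1)) - (C(m-1,n) - C(m-1,n+1))`. -/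
lemma aux_term_eq (n m : ℕ) (hn : 1 ≤ n) (hm : n ≤ m) (hm2 : m ≤ 2 * n) :
    ((2 * (n : ℚ) - m) / m) * (m.choose n : ℚ)
      = ((m.choose n : ℚ) - (m.choose (n + 1) : ℚ))
        - (((m - 1).choose n : ℚ) - ((m - 1).choose (n + 1) : ℚ)) := by
  have hm1 : 1 ≤ m := le_trans hn hm
  have hm0 : (m : ℚ) ≠ 0 := by positivity
  rcases hm.eq_or_lt with h | h
  · subst h
    rw [Nat.choose_self, Nat.choose_eq_zero_of_lt (by omega),
      Nat.choose_eq_zero_of_lt (by omega), Nat.choose_eq_zero_of_lt (by omega)]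
    push_cast
    field_simp
    ring
  · -- n < m, so n ≤ m - 1
    have hnm1 : n ≤ m - 1 := by omega
    have h1 : m.choose (n + 1) = (m - 1).choose n + (m - 1).choose (n + 1) := by
      rw [show m = (m - 1) + 1 by omega, Nat.choose_succ_succ']
      simp
    have h2 := Nat.choose_succ_right_eq m n
    have h3 := Nat.choose_succ_right_eq (m - 1) n
    have h1' : (m.choose (n + 1) : ℚ) = ((m - 1).choose n : ℚ) + ((m - 1).choose (n + 1) : ℚ) := by
      exact_mod_cast congrArg (Nat.cast : ℕ → ℚ) h1
    have h2' : (m.choose (n + 1) : ℚ) * (n + 1) = (m.choose n : ℚ) * ((m : ℚ) - n) := by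
      have := congrArg (Nat.cast : ℕ → ℚ) h2
      push_cast [Nat.cast_sub hm] at this
      linarith [this]
    have h3' : ((m - 1).choose (n + 1) : ℚ) * (n + 1)
        = ((m - 1).choose n : ℚ) * ((m : ℚ) - 1 - n) := by
      have := congrArg (Nat.cast : ℕ → ℚ) h3
      push_cast [Nat.cast_sub hnm1, Nat.cast_sub hm1] at this
      linarith [this]
    rw [div_mul_eq_mul_div, div_eq_iff hm0]
    linear_combination ((m : ℚ) - 2 * n - 2) * h1' + 2 * h2' - 2 * h3'

/-- For `n ≥ 1`, the sum over `j` of `((j+1)/(2n-j-1)) * binom(2n-j-1, n)` (the sum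
effectively runs over `0 ≤ j ≤ n-1`) equals the Catalan number `C_n = (1/(n+1)) binom(2n,n)`. -/
theorem sum_returns_counts_eq_catalan (n : ℕ) (hn : 1 ≤ n) :
    ∑ j ∈ Finset.range n,
        (((j : ℚ) + 1) / (2 * (n : ℚ) - (j : ℚ) - 1)) * ((2 * n - j - 1).choose n : ℚ)
      = (catalan n : ℚ) ∧ (catalan n : ℚ) = ((2 * n).choose n : ℚ) / ((n : ℚ) + 1) := by
  have hcat : (catalan n : ℚ) = ((2 * n).choose n : ℚ) / ((n : ℚ) + 1) := by
    have h := succ_mul_catalan_eq_centralBinom n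
    rw [Nat.centralBinom_eq_two_mul_choose] at h
    have h' : ((n : ℚ) + 1) * (catalan n : ℚ) = ((2 * n).choose n : ℚ) := by
      exact_mod_cast congrArg (Nat.cast : ℕ → ℚ) h
    have hne : (n : ℚ) + 1 ≠ 0 := by positivity
    field_simp
    linarith [h']
  refine ⟨?_, hcat⟩
  set f : ℕ → ℚ := fun j =>
    ((2 * n - j - 1).choose n : ℚ) - ((2 * n - j - 1).choose (n + 1) : ℚ) with hf
  have hsum : ∑ j ∈ Finset.range n,
      (((j : ℚ) + 1) / (2 * (n : ℚ) - (j : ℚ) - 1)) * ((2 * n - j - 1).choose n : ℚ)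
      = f 0 - f n := by
    rw [← Finset.sum_range_sub' f n]
    refine Finset.sum_congr rfl fun j hj => ?_
    rw [Finset.mem_range] at hj
    set m := 2 * n - j - 1 with hmdef
    have hm : n ≤ m := by omega
    have hm2 : m ≤ 2 * n := by omega
    have hcast : (m : ℚ) = 2 * (n : ℚ) - (j : ℚ) - 1 := by
      have : (m : ℕ) + j + 1 = 2 * n := by omega
      have := congrArg (Nat.cast : ℕ → ℚ) this
      push_cast at this
      linarith
    have hjm : ((j : ℚ) + 1) = 2 * (n : ℚ) - (m : ℚ) := by linarith [hcast]
    have hstep : 2 * n - (j + 1) - 1 = m - 1 := by omega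
    simp only [hf, hstep]
    rw [hjm, hcast.symm]
    exact aux_term_eq n m hn hm hm2
  have hfn : f n = 0 := by
    have h1 : 2 * n - n - 1 = n - 1 := by omega
    simp only [hf, h1, Nat.choose_eq_zero_of_lt (show n - 1 < n by omega),
      Nat.choose_eq_zero_of_lt (show n - 1 < n + 1 by omega)]
    norm_num
  rw [hsum, hfn, sub_zero, hcat]
  -- now: f 0 = C(2n,n)/(n+1), with f 0 = C(2n-1,n) - C(2n-1,n+1)
  have h01 : 2 * n - 0 - 1 = 2 * n - 1 := by omega
  simp only [hf, h01]
  have hsymm : (2 * n - 1).choose (n - 1) = (2 * n - 1).choose n := by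
    have : 2 * n - 1 - n = n - 1 := by omega
    rw [← this]
    exact Nat.choose_symm (by omega)
  have g2 : (2 * n).choose n = (2 * n - 1).choose (n - 1) + (2 * n - 1).choose n := by
    rw [show 2 * n = (2 * n - 1) + 1 by omega, show n = (n - 1) + 1 by omega,
      Nat.choose_succ_succ']
    simp
  have g3 : (2 * n).choose (n + 1) = (2 * n - 1).choose n + (2 * n - 1).choose (n + 1) := by
    rw [show 2 * n = (2 * n - 1) + 1 by omega, Nat.choose_succ_succ']
    simp
  have g4 := Nat.choose_succ_right_eq (2 * n) n
  have g2' : ((2 * n).choose n : ℚ) = 2 * ((2 * n - 1).choose n : ℚ) := by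
    rw [g2, hsymm]; push_cast; ring
  have g3' : ((2 * n).choose (n + 1) : ℚ)
      = ((2 * n - 1).choose n : ℚ) + ((2 * n - 1).choose (n + 1) : ℚ) := by
    exact_mod_cast congrArg (Nat.cast : ℕ → ℚ) g3
  have g4' : ((2 * n).choose (n + 1) : ℚ) * ((n : ℚ) + 1)
      = ((2 * n).choose n : ℚ) * (n : ℚ) := by
    have := congrArg (Nat.cast : ℕ → ℚ) g4
    push_cast [show 2 * n - n = n by omega] at this
    linarith [this]
  have hne : (n : ℚ) + 1 ≠ 0 := by positivity
  rw [eq_div_iff hne]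
  linear_combination (-(n : ℚ) - 1) * g2' + ((n : ℚ) + 1) * g3' - g4'
end

section
/- Continuity theorem for discrete limit laws: let Omega be a subset of the open unit disc of the complex plane with an accumulation point in the open unit disc. Let P_n(u) = sum_{k>=0} p_{n,k} u^k and q(u) = sum_{k>=0} q_k u^k be power series with nonnegative coefficients, each P_n a probability generating function (coefficients summing to 1), analytic on the closed unit disc. If lim_{n->infinity} P_n(u) = q(u) for every u in Omega, then for every fixed k, lim_{n->infinity} p_{n,k} = q_k and lim_{n->infinity} sum_{j<=k} p_{n,j} = sum_{j<=k} q_j. -/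
open Filter

open scoped Topology

/-- If the power series with real coefficients `c` converges (as a complex series) on the
open unit disc, then the associated formal multilinear series has radius at least `1` and
its sum is the tsum. -/
lemma aux_hasFPowerSeriesOnBall (c : ℕ → ℝ)
    (hsum : ∀ u ∈ Metric.ball (0 : ℂ) 1, Summable fun k => (c k : ℂ) * u ^ k) :
    HasFPowerSeriesOnBall (fun u : ℂ => ∑' k, (c k : ℂ) * u ^ k)
      (FormalMultilinearSeries.ofScalars ℂ (fun k => (c k : ℂ))) 0 1 := by
  set S := FormalMultilinearSeries.ofScalars ℂ (fun k => (c k : ℂ)) with hS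
  have hrad : (1 : ENNReal) ≤ S.radius := by
    refine ENNReal.le_of_forall_nnreal_lt fun r hr => ?_
    have hr1 : (r : ℝ) < 1 := by exact_mod_cast hr
    have hmem : (((r : ℝ) : ℂ)) ∈ Metric.ball (0 : ℂ) 1 := by
      rw [Metric.mem_ball, dist_zero_right, Complex.norm_real, Real.norm_eq_abs,
        abs_of_nonneg r.coe_nonneg]
      exact hr1
    have h1 : Summable fun k => (c k : ℂ) * ((r : ℝ) : ℂ) ^ k := hsum _ hmem
    have h2 : Summable fun k => c k * (r : ℝ) ^ k := by
      rw [← Complex.summable_ofReal]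
      convert h1 using 2 with k
      push_cast
      ring
    have h3 : Summable fun k => ‖S k‖ * (r : ℝ) ^ k := by
      have := h2.abs
      refine this.of_nonneg_of_le (fun k => ?_) (fun k => ?_)
      · positivity
      · rw [hS, FormalMultilinearSeries.ofScalars_norm, Complex.norm_real, Real.norm_eq_abs]
        rw [abs_mul, abs_of_nonneg (by positivity : (0:ℝ) ≤ (r : ℝ) ^ k)]
    exact S.le_radius_of_summable h3
  have hb := S.hasFPowerSeriesOnBall (lt_of_lt_of_le one_pos hrad)
  have hb1 : HasFPowerSeriesOnBall S.sum S 0 1 := hb.mono one_pos hrad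
  have hfun : S.sum = fun u : ℂ => ∑' k, (c k : ℂ) * u ^ k := by
    funext u
    rw [FormalMultilinearSeries.sum]
    exact tsum_congr fun n => by
      rw [hS, FormalMultilinearSeries.ofScalars_apply_eq, smul_eq_mul]
  rwa [hfun] at hb1

/-- Continuity theorem for discrete limit laws: let `Ω` be a subset of the open unit disc
of `ℂ` with an accumulation point in the open unit disc. Let `Pₙ(u) = ∑_k p_{n,k} u^k`
and `q(u) = ∑_k q_k u^k` be power series with nonnegative coefficients, each `Pₙ` a
probability generating function (coefficients summing to `1`) analytic on the closed unit
disc. If `Pₙ(u) → q(u)` for every `u ∈ Ω`, then for every fixed `k`,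
`p_{n,k} → q_k` and `∑_{j≤k} p_{n,j} → ∑_{j≤k} q_j` as `n → ∞`. -/
theorem continuity_theorem_discrete_limit_laws
    (Ω : Set ℂ) (hΩ : Ω ⊆ Metric.ball 0 1)
    (hacc : ∃ z ∈ Metric.ball (0 : ℂ) 1, AccPt z (Filter.principal Ω))
    (p : ℕ → ℕ → ℝ) (hp0 : ∀ n k, 0 ≤ p n k) (hp1 : ∀ n, HasSum (p n) 1)
    (hPanal : ∀ n, ∀ u ∈ Metric.closedBall (0 : ℂ) 1,
      Summable fun k => (p n k : ℂ) * u ^ k)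
    (q : ℕ → ℝ) (hq0 : ∀ k, 0 ≤ q k)
    (hqsum : ∀ u ∈ Metric.ball (0 : ℂ) 1, Summable fun k => (q k : ℂ) * u ^ k)
    (hconv : ∀ u ∈ Ω,
      Tendsto (fun n => ∑' k, (p n k : ℂ) * u ^ k) atTop
        (nhds (∑' k, (q k : ℂ) * u ^ k))) :
    ∀ k : ℕ,
      Tendsto (fun n => p n k) atTop (nhds (q k)) ∧
      Tendsto (fun n => ∑ j ∈ Finset.range (k + 1), p n j) atTop
        (nhds (∑ j ∈ Finset.range (k + 1), q j)) := by
  have hple : ∀ n k, p n k ≤ 1 := fun n k => le_hasSum (hp1 n) k fun j _ => hp0 n j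
  obtain ⟨z, hz, hzacc⟩ := hacc
  have hball : Metric.eball (0 : ℂ) 1 = Metric.ball (0 : ℂ) 1 := by
    rw [← ENNReal.ofReal_one, Metric.emetric_ball]
  -- frequently in Ω near z
  have hfreqΩ : ∃ᶠ w in 𝓝[≠] z, w ∈ Ω := by
    rw [accPt_iff_frequently] at hzacc
    rw [frequently_nhdsWithin_iff]
    exact hzacc.mono fun w hw => ⟨hw.2, by simpa using hw.1⟩
  have key : ∀ k, Tendsto (fun n => p n k) atTop (nhds (q k)) := by
    intro k
    rw [tendsto_iff_ultrafilter]
    intro 𝒰 h𝒰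
    -- extract pointwise limits along the ultrafilter
    have hcomp : ∀ j : ℕ, ∃ a ∈ Set.Icc (0 : ℝ) 1,
        Tendsto (fun n => p n j) 𝒰 (𝓝 a) := by
      intro j
      obtain ⟨a, ha, hle⟩ := (isCompact_Icc (a := (0:ℝ)) (b := 1)).ultrafilter_le_nhds
        (Ultrafilter.map (fun n => p n j) 𝒰)
        (by
          rw [Ultrafilter.coe_map, le_principal_iff, mem_map]
          exact univ_mem' fun n => ⟨hp0 n j, hple n j⟩)
      exact ⟨a, ha, by rwa [Ultrafilter.coe_map] at hle⟩
    choose r hrIcc hrT using hcomp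
    -- the limit power series agrees with q's on Ω
    have hrsum : ∀ u ∈ Metric.ball (0 : ℂ) 1, Summable fun j => (r j : ℂ) * u ^ j := by
      intro u hu
      have hu1 : ‖u‖ < 1 := by rwa [Metric.mem_ball, dist_zero_right] at hu
      refine Summable.of_norm_bounded (summable_geometric_of_lt_one (norm_nonneg u) hu1)
        fun j => ?_
      rw [norm_mul, norm_pow, Complex.norm_real, Real.norm_eq_abs,
        abs_of_nonneg (hrIcc j).1]
      exact mul_le_of_le_one_left (by positivity) (hrIcc j).2
    have heq : ∀ u ∈ Ω, (∑' j, (r j : ℂ) * u ^ j) = ∑' j, (q j : ℂ) * u ^ j := by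
      intro u hu
      have hu1 : ‖u‖ < 1 := by
        have := hΩ hu
        rwa [Metric.mem_ball, dist_zero_right] at this
      have h1 : Tendsto (fun n => ∑' j, (p n j : ℂ) * u ^ j) 𝒰
          (𝓝 (∑' j, (r j : ℂ) * u ^ j)) := by
        refine tendsto_tsum_of_dominated_convergence (bound := fun j => ‖u‖ ^ j)
          (summable_geometric_of_lt_one (norm_nonneg u) hu1) (fun j => ?_) ?_
        · exact ((Complex.continuous_ofReal.tendsto _).comp (hrT j)).mul_const _
        · refine Eventually.of_forall fun n j => ?_
          rw [norm_mul, norm_pow, Complex.norm_real, Real.norm_eq_abs,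
            abs_of_nonneg (hp0 n j)]
          exact mul_le_of_le_one_left (by positivity) (hple n j)
      have h2 : Tendsto (fun n => ∑' j, (p n j : ℂ) * u ^ j) 𝒰
          (𝓝 (∑' j, (q j : ℂ) * u ^ j)) := (hconv u hu).mono_left h𝒰
      exact tendsto_nhds_unique h1 h2
    -- identity theorem: r = q
    have hfr := aux_hasFPowerSeriesOnBall r hrsum
    have hfq := aux_hasFPowerSeriesOnBall q hqsum
    have har : AnalyticOnNhd ℂ (fun u : ℂ => ∑' j, (r j : ℂ) * u ^ j)
        (Metric.ball (0 : ℂ) 1) := by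
      rw [← hball]; simpa using hfr.analyticOnNhd
    have haq : AnalyticOnNhd ℂ (fun u : ℂ => ∑' j, (q j : ℂ) * u ^ j)
        (Metric.ball (0 : ℂ) 1) := by
      rw [← hball]; simpa using hfq.analyticOnNhd
    have hfreq : ∃ᶠ w in 𝓝[≠] z,
        (fun u : ℂ => ∑' j, (r j : ℂ) * u ^ j) w
          = (fun u : ℂ => ∑' j, (q j : ℂ) * u ^ j) w :=
      hfreqΩ.mono fun w hw => heq w hw
    have heqOn := har.eqOn_of_preconnected_of_frequently_eq haq
      (convex_ball (0 : ℂ) 1).isPreconnected hz hfreq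
    have hev : (fun u : ℂ => ∑' j, (r j : ℂ) * u ^ j)
        =ᶠ[𝓝 (0 : ℂ)] fun u : ℂ => ∑' j, (q j : ℂ) * u ^ j :=
      heqOn.eventuallyEq_of_mem (Metric.ball_mem_nhds 0 one_pos)
    have hSeq : FormalMultilinearSeries.ofScalars ℂ (fun j => (r j : ℂ))
        = FormalMultilinearSeries.ofScalars ℂ (fun j => (q j : ℂ)) :=
      hfr.hasFPowerSeriesAt.eq_formalMultilinearSeries
        (hfq.hasFPowerSeriesAt.congr hev.symm)
    have hrq : r = q := by
      rw [FormalMultilinearSeries.ofScalars_series_eq_iff] at hSeq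
      funext j
      exact_mod_cast congrFun hSeq j
    rw [← hrq]
    exact hrT k
  intro k
  exact ⟨key k, tendsto_finset_sum _ fun j _ => key j⟩
end

section
/- For generalized Dyck paths from (0,0) to ((t+1)n, 0) with up-steps (1,1) and down-steps (1,-t) staying weakly above the x-axis, the number of such paths is the Fuss-Catalan number (1/(tn+1)) binom((t+1)n, n), and the expected number of nontrivial returns equals (2n-2)/(tn+2). -/
open Finset
open scoped Classical

/-- Generalized `t`-Dyck paths from `(0,0)` to `((t+1)n, 0)`: paths with up-steps `(1,1)`
and down-steps `(1,-t)` staying weakly above the x-axis and ending on it. -/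
noncomputable def genDyckPaths (t n : ℕ) : Finset (Fin ((t + 1) * n) → Bool) :=
  Finset.univ.filter fun p =>
    (∀ m : ℕ, t * downCount p m ≤ upCount p m) ∧
    upCount p ((t + 1) * n) = t * downCount p ((t + 1) * n)

/-- number of nontrivial returns of `p`: interior lattice points where the path meets
the x-axis. -/
def genReturns (t : ℕ) {N : ℕ} (p : Fin N → Bool) : ℕ :=
  ((Finset.Ioo 0 N).filter fun m => upCount p m = t * downCount p m).card

namespace GD

/-- weight of a step: up = +1, down = -t -/
def wt (t : ℕ) (b : Bool) : ℤ := if b then 1 else -(t : ℤ)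

/-- extend a finite path to ℕ by `true` padding -/
def pext {N : ℕ} (p : Fin N → Bool) : ℕ → Bool :=
  fun i => if h : i < N then p ⟨i, h⟩ else true

/-- prefix sum (height after m steps) -/
def Sp (t : ℕ) {N : ℕ} (p : Fin N → Bool) (m : ℕ) : ℤ :=
  ∑ i ∈ Finset.range m, wt t (pext p i)

/-- number of `false` (down) entries -/
def falseCnt {N : ℕ} (p : Fin N → Bool) : ℕ :=
  ∑ i : Fin N, (if p i = false then 1 else 0)

lemma wt_le_one (t : ℕ) (b : Bool) : wt t b ≤ 1 := by
  cases b <;> simp [wt] <;> omega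

lemma wt_true_of_pos {t : ℕ} {b : Bool} (h : 0 < wt t b) : b = true := by
  cases b <;> simp [wt] at h ⊢; omega

lemma wt_eq (t : ℕ) (b : Bool) :
    wt t b = (if b = true then 1 else 0) - (t : ℤ) * (if b = false then 1 else 0) := by
  cases b <;> simp [wt]

@[simp] lemma Sp_zero (t : ℕ) {N : ℕ} (p : Fin N → Bool) : Sp t p 0 = 0 := by
  simp [Sp]

lemma Sp_succ (t : ℕ) {N : ℕ} (p : Fin N → Bool) (m : ℕ) :
    Sp t p (m + 1) = Sp t p m + wt t (pext p m) := by
  simp [Sp, Finset.sum_range_succ]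

lemma sum_range_add' {M : Type*} [AddCommMonoid M] (f : ℕ → M) (a b : ℕ) :
    ∑ i ∈ range (a + b), f i = (∑ i ∈ range a, f i) + ∑ i ∈ range b, f (a + i) := by
  induction b with
  | zero => simp
  | succ b ih => rw [← Nat.add_assoc, Finset.sum_range_succ, ih, Finset.sum_range_succ]; rw [add_assoc]

lemma Sp_add (t : ℕ) {N : ℕ} (p : Fin N → Bool) (a b : ℕ) :
    Sp t p (a + b) = Sp t p a + ∑ i ∈ range b, wt t (pext p (a + i)) := by
  simp [Sp, sum_range_add']

/-- total height after all N steps -/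
lemma Sp_total (t : ℕ) {N : ℕ} (p : Fin N → Bool) :
    Sp t p N = (N : ℤ) - ((t : ℤ) + 1) * (falseCnt p : ℤ) := by
  have h1 : Sp t p N = ∑ i : Fin N, wt t (p i) := by
    rw [Sp, ← Fin.sum_univ_eq_sum_range (fun i => wt t (pext p i)) N]
    refine Finset.sum_congr rfl fun i _ => ?_
    simp [pext, i.isLt]
  rw [h1]
  have h2 : ∀ i : Fin N, wt t (p i) =
      1 - ((t : ℤ) + 1) * (if p i = false then 1 else 0) := by
    intro i; cases hb : p i <;> simp [wt] <;> ring
  rw [Finset.sum_congr rfl (fun i _ => h2 i), Finset.sum_sub_distrib]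
  rw [Finset.sum_const, Finset.card_univ, Fintype.card_fin]
  rw [← Finset.mul_sum]
  congr 1
  · simp
  · rw [falseCnt]; push_cast
    rfl

/-- periodic extension of a length-L word -/
def gext {L : ℕ} (s : Fin L → Bool) : ℕ → Bool := fun i => pext s (i % L)

/-- prefix sums of the periodic extension -/
def G (t : ℕ) {L : ℕ} (s : Fin L → Bool) (m : ℕ) : ℤ :=
  ∑ i ∈ range m, wt t (gext s i)

variable {t L : ℕ}

lemma gext_eq {s : Fin L → Bool} {i : ℕ} (h : i < L) : gext s i = s ⟨i, h⟩ := by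
  simp [gext, pext, Nat.mod_eq_of_lt h, h]

lemma gext_add_L (hL : 0 < L) (s : Fin L → Bool) (i : ℕ) :
    gext s (i + L) = gext s i := by
  simp [gext, Nat.add_mod_right]

@[simp] lemma G_zero (s : Fin L → Bool) : G t s 0 = 0 := by simp [G]

lemma G_succ (s : Fin L → Bool) (m : ℕ) :
    G t s (m + 1) = G t s m + wt t (gext s m) := by
  simp [G, Finset.sum_range_succ]

lemma G_eq_Sp {s : Fin L → Bool} {m : ℕ} (h : m ≤ L) : G t s m = Sp t s m := by
  refine Finset.sum_congr rfl fun i hi => ?_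
  rw [Finset.mem_range] at hi
  have : i < L := lt_of_lt_of_le hi h
  rw [gext_eq this]
  simp [pext, this]

lemma G_periodic (hL : 0 < L) (s : Fin L → Bool) (m : ℕ) :
    G t s (m + L) = G t s m + G t s L := by
  induction m with
  | zero => simp
  | succ m ih =>
    have h1 : m + 1 + L = (m + L) + 1 := by omega
    rw [h1, G_succ, ih, G_succ, gext_add_L hL]
    ring

lemma G_mul_add (hL : 0 < L) (s : Fin L → Bool) (q m : ℕ) :
    G t s (q * L + m) = q * G t s L + G t s m := by
  induction q with
  | zero => simp
  | succ q ih =>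
    have h1 : (q + 1) * L + m = (q * L + m) + L := by ring
    rw [h1, G_periodic hL, ih]
    push_cast
    ring

lemma G_decompose (hL : 0 < L) (s : Fin L → Bool) (i : ℕ) :
    G t s i = (i / L : ℕ) * G t s L + G t s (i % L) := by
  conv_lhs => rw [← Nat.div_add_mod i L, Nat.mul_comm]
  exact G_mul_add hL s _ _

lemma G_L_eq (hL : 0 < L) (s : Fin L → Bool) :
    G t s L = (L : ℤ) - ((t : ℤ) + 1) * (falseCnt s : ℤ) := by
  rw [G_eq_Sp le_rfl, Sp_total]

/-- rotation of a word by k -/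
def rot {L : ℕ} (k : ℕ) (s : Fin L → Bool) : Fin L → Bool :=
  fun i => gext s ((i : ℕ) + k)

lemma gext_rot (hL : 0 < L) (k : ℕ) (s : Fin L → Bool) (i : ℕ) :
    gext (rot k s) i = gext s (i + k) := by
  have h1 : i % L < L := Nat.mod_lt _ hL
  rw [gext, pext, dif_pos h1]
  show gext s (i % L + k) = gext s (i + k)
  simp [gext, Nat.mod_add_mod]

lemma rot_rot (hL : 0 < L) (k m : ℕ) (s : Fin L → Bool) :
    rot k (rot m s) = rot (k + m) s := by
  funext i
  rw [rot, gext_rot hL, rot, Nat.add_assoc]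

lemma rot_zero (s : Fin L → Bool) : rot 0 s = s := by
  funext i
  rw [rot]
  exact gext_eq i.isLt

lemma rot_L (hL : 0 < L) (s : Fin L → Bool) : rot L s = s := by
  funext i
  rw [rot, gext_add_L hL]
  exact gext_eq i.isLt

lemma G_rot (hL : 0 < L) (k : ℕ) (s : Fin L → Bool) (m : ℕ) :
    G t (rot k s) m = G t s (k + m) - G t s k := by
  have h1 : G t s (k + m) = G t s k + ∑ i ∈ range m, wt t (gext s (k + i)) := by
    rw [G, sum_range_add']; rfl
  rw [h1, G]
  have h2 : ∀ i ∈ range m, wt t (gext (rot k s) i) = wt t (gext s (k + i)) := by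
    intro i _
    rw [gext_rot hL, Nat.add_comm]
  rw [Finset.sum_congr rfl h2]
  ring

lemma falseCnt_rot (hL : 0 < L) (k : ℕ) (s : Fin L → Bool) :
    falseCnt (rot k s) = falseCnt s := by
  set sig : Fin L → Fin L := fun i => ⟨((i : ℕ) + k) % L, Nat.mod_lt _ hL⟩ with hsig
  have hrot : ∀ i : Fin L, rot k s i = s (sig i) := by
    intro i
    rw [rot, gext, pext, hsig]
    simp [Nat.mod_lt _ hL]
  have hinj : Function.Injective sig := by
    intro i j hij
    rw [hsig] at hij
    simp only [Fin.mk.injEq] at hij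
    have h3 : Nat.ModEq L ((i : ℕ) + k) ((j : ℕ) + k) := hij
    have h4 : Nat.ModEq L (i : ℕ) (j : ℕ) := h3.add_right_cancel' k
    have hi : (i : ℕ) % L = i := Nat.mod_eq_of_lt i.isLt
    have hj : (j : ℕ) % L = j := Nat.mod_eq_of_lt j.isLt
    exact Fin.ext (by rw [Nat.ModEq] at h4; omega)
  have hbij : Function.Bijective sig := Finite.injective_iff_bijective.mp hinj
  rw [falseCnt, falseCnt]
  exact Fintype.sum_bijective sig hbij _ _ (fun i => by rw [hrot i])

/-- words all of whose nonempty prefixes have positive height, with n down-steps -/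
noncomputable def Pos (t L n : ℕ) : Finset (Fin L → Bool) :=
  univ.filter fun q => (∀ m, 0 < m → m ≤ L → 0 < Sp t q m) ∧ falseCnt q = n

lemma mem_Pos {n : ℕ} {q : Fin L → Bool} :
    q ∈ Pos t L n ↔ (∀ m, 0 < m → m ≤ L → 0 < Sp t q m) ∧ falseCnt q = n := by
  simp [Pos]

/-- k is a good rotation point -/
def good (t : ℕ) {L : ℕ} (s : Fin L → Bool) (k : ℕ) : Prop :=
  ∀ m, 0 < m → m ≤ L → G t s k < G t s (k + m)

lemma rot_mem_Pos_iff (hL : 0 < L) (s : Fin L → Bool) (k : ℕ) :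
    rot k s ∈ Pos t L (falseCnt s) ↔ good t s k := by
  rw [mem_Pos]
  constructor
  · rintro ⟨h1, _⟩ m hm hmL
    have := h1 m hm hmL
    rw [← G_eq_Sp hmL, G_rot hL] at this
    omega
  · intro h
    refine ⟨fun m hm hmL => ?_, falseCnt_rot hL k s⟩
    rw [← G_eq_Sp hmL, G_rot hL]
    have := h m hm hmL
    omega

lemma good_tail (hL : 0 < L) {s : Fin L → Bool} (hr : 0 < G t s L) {k : ℕ}
    (hg : good t s k) : ∀ i, k < i → G t s k < G t s i := by
  intro i
  induction i using Nat.strong_induction_on with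
  | _ i ih =>
    intro hki
    by_cases hile : i ≤ k + L
    · have := hg (i - k) (by omega) (by omega)
      rwa [show k + (i - k) = i by omega] at this
    · have h1 : k < i - L := by omega
      have h2 : i - L < i := by omega
      have h3 := ih (i - L) h2 h1
      have h4 : G t s ((i - L) + L) = G t s (i - L) + G t s L := G_periodic hL s _
      rw [show (i - L) + L = i by omega] at h4
      omega

lemma card_good (hL : 0 < L) (s : Fin L → Bool) (hr : 0 < G t s L) :
    ((range L).filter fun k => good t s k).card = (G t s L).toNat := by
  classical
  set r := G t s L with hrdef
  set Mims := (range L).image (G t s) with hMims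
  have hMne : Mims.Nonempty := by
    refine Finset.Nonempty.image ?_ _
    exact ⟨0, Finset.mem_range.mpr hL⟩
  set M := Mims.min' hMne with hMdef
  have hMle : ∀ i, i < L → M ≤ G t s i := by
    intro i hi
    exact Finset.min'_le _ _ (Finset.mem_image_of_mem _ (Finset.mem_range.mpr hi))
  obtain ⟨i0, hi0, hGi0⟩ : ∃ i0, i0 < L ∧ G t s i0 = M := by
    obtain ⟨i0, hi0, h⟩ := Finset.mem_image.mp (Finset.min'_mem Mims hMne)
    exact ⟨i0, Finset.mem_range.mp hi0, h⟩
  have hM0 : M ≤ 0 := by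
    have := hMle 0 hL
    simpa using this
  have htailge : ∀ i, L ≤ i → M + r ≤ G t s i := by
    intro i hLi
    have hd := G_decompose (t := t) hL s i
    rw [← hrdef] at hd
    have h1 : 1 ≤ i / L := (Nat.one_le_div_iff hL).mpr hLi
    have h2 : r ≤ (i / L : ℕ) * r := by
      nlinarith [hr, (by exact_mod_cast h1 : (1 : ℤ) ≤ (i / L : ℕ))]
    have h3 : M ≤ G t s (i % L) := hMle _ (Nat.mod_lt _ hL)
    omega
  rw [show (G t s L).toNat = (M + r - M).toNat by omega, ← Int.card_Ico]
  refine Finset.card_bij (fun k _ => G t s k) ?_ ?_ ?_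
  · -- maps into Ico
    rintro k hk
    rw [Finset.mem_filter, Finset.mem_range] at hk
    obtain ⟨hkL, hgk⟩ := hk
    rw [Finset.mem_Ico]
    constructor
    · exact hMle k hkL
    · have hi0k : i0 ≤ k := by
        by_contra hc
        have := good_tail hL hr hgk i0 (by omega)
        have := hMle k hkL
        omega
      have hk2 : k < i0 + L := by omega
      have := good_tail hL hr hgk (i0 + L) hk2
      have hper : G t s (i0 + L) = G t s i0 + r := G_periodic hL s i0
      omega
  · -- injective
    rintro k1 hk1 k2 hk2 heq
    rw [Finset.mem_filter, Finset.mem_range] at hk1 hk2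
    rcases lt_trichotomy k1 k2 with h | h | h
    · exact absurd (good_tail hL hr hk1.2 k2 h) (by omega)
    · exact h
    · exact absurd (good_tail hL hr hk2.2 k1 h) (by omega)
  · -- surjective
    rintro v hv
    rw [Finset.mem_Ico] at hv
    set A := (range L).filter (fun i => G t s i ≤ v) with hA
    have hAne : A.Nonempty := ⟨i0, by
      rw [hA, Finset.mem_filter, Finset.mem_range]
      exact ⟨hi0, by omega⟩⟩
    set k := A.max' hAne with hk
    have hkA : k ∈ A := Finset.max'_mem A hAne
    rw [hA, Finset.mem_filter, Finset.mem_range] at hkA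
    obtain ⟨hkL, hGkv⟩ := hkA
    have hafter : ∀ i, k < i → v < G t s i := by
      intro i hi
      by_cases hiL : i < L
      · by_contra hc
        push_neg at hc
        have hiA : i ∈ A := by
          rw [hA, Finset.mem_filter, Finset.mem_range]
          exact ⟨hiL, hc⟩
        have := Finset.le_max' A i hiA
        omega
      · have := htailge i (by omega)
        omega
    have hGk : G t s k = v := by
      by_contra hc
      have h1 : G t s k < v := lt_of_le_of_ne hGkv hc
      have h2 : G t s (k + 1) = G t s k + wt t (gext s k) := G_succ s k
      have h3 := wt_le_one t (gext s k)
      have h4 := hafter (k + 1) (by omega)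
      omega
    refine ⟨k, ?_, hGk⟩
    rw [Finset.mem_filter, Finset.mem_range]
    refine ⟨hkL, fun m hm hmL => ?_⟩
    have := hafter (k + m) (by omega)
    omega

/-- counting words with n falses -/
lemma card_falseCnt (L n : ℕ) :
    ((univ : Finset (Fin L → Bool)).filter fun s => falseCnt s = n).card
      = Nat.choose L n := by
  classical
  have h1 : Nat.choose L n = ((univ : Finset (Fin L)).powersetCard n).card := by
    rw [Finset.card_powersetCard, Finset.card_univ, Fintype.card_fin]
  rw [h1]
  refine Finset.card_bij (fun s _ => univ.filter fun i => s i = false) ?_ ?_ ?_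
  · rintro s hs
    rw [Finset.mem_filter] at hs
    rw [Finset.mem_powersetCard]
    refine ⟨Finset.subset_univ _, ?_⟩
    rw [Finset.card_filter]
    exact hs.2
  · rintro s1 hs1 s2 hs2 heq
    funext i
    have hmem : (s1 i = false) ↔ (s2 i = false) := by
      constructor
      · intro h
        have : i ∈ univ.filter fun j => s2 j = false := by
          rw [← heq, Finset.mem_filter]; exact ⟨Finset.mem_univ _, h⟩
        exact (Finset.mem_filter.mp this).2
      · intro h
        have : i ∈ univ.filter fun j => s1 j = false := by
          rw [heq, Finset.mem_filter]; exact ⟨Finset.mem_univ _, h⟩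
        exact (Finset.mem_filter.mp this).2
    cases h1 : s1 i <;> cases h2 : s2 i <;> simp_all
  · rintro S hS
    rw [Finset.mem_powersetCard] at hS
    refine ⟨fun i => decide (i ∉ S), ?_, ?_⟩
    · rw [Finset.mem_filter]
      refine ⟨Finset.mem_univ _, ?_⟩
      rw [falseCnt, ← hS.2]
      have h2 : ∀ i : Fin L, (if (decide (i ∉ S) : Bool) = false then (1:ℕ) else 0)
          = if i ∈ S then 1 else 0 := by
        intro i; by_cases h : i ∈ S <;> simp [h]
      rw [Finset.sum_congr rfl (fun i _ => h2 i)]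
      rw [← Finset.card_filter]
      congr 1
      ext x; simp
    · ext x; simp


lemma G_L_val {n : ℕ} {s : Fin L → Bool} (hs : falseCnt s = n) (hL : 0 < L) :
    G t s L = (L : ℤ) - ((t : ℤ) + 1) * (n : ℤ) := by
  rw [G_L_eq hL, hs]

/-- MAIN COUNT: `|Pos t L n| * L = (L - (t+1)n) * choose L n` -/
lemma Pos_card_mul (t L n : ℕ) (hLn : (t + 1) * n < L) :
    (Pos t L n).card * L = (L - (t + 1) * n) * Nat.choose L n := by
  classical
  have hL : 0 < L := by omega
  set T := (univ : Finset (Fin L → Bool)).filter fun s => falseCnt s = n with hT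
  have hTcard : T.card = Nat.choose L n := card_falseCnt L n
  have hGs : ∀ s ∈ T, G t s L = (L : ℤ) - ((t : ℤ) + 1) * (n : ℤ) := by
    intro s hs
    rw [hT, Finset.mem_filter] at hs
    exact G_L_val hs.2 hL
  have hGpos : ∀ s ∈ T, 0 < G t s L := by
    intro s hs
    rw [hGs s hs]
    have : ((t : ℤ) + 1) * (n : ℤ) = (((t+1)*n : ℕ) : ℤ) := by push_cast; ring
    omega
  -- Σ over s in T of #good rotations = choose L n * (L - (t+1)n)
  have hsum1 : ∑ s ∈ T, ((range L).filter fun k => rot k s ∈ Pos t L n).card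
      = Nat.choose L n * (L - (t + 1) * n) := by
    have hps : ∀ s ∈ T, ((range L).filter fun k => rot k s ∈ Pos t L n).card
        = L - (t + 1) * n := by
      intro s hs
      have hfc : falseCnt s = n := (Finset.mem_filter.mp hs).2
      have hgood : ∀ k, (rot k s ∈ Pos t L n ↔ good t s k) := by
        intro k
        rw [← hfc]
        exact rot_mem_Pos_iff hL s k
      rw [Finset.filter_congr (fun k _ => by rw [hgood k]), card_good hL s (hGpos s hs),
        hGs s hs]
      have : ((t : ℤ) + 1) * (n : ℤ) = (((t+1)*n : ℕ) : ℤ) := by push_cast; ring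
      omega
    rw [Finset.sum_congr rfl hps, Finset.sum_const, hTcard, smul_eq_mul]
  -- Σ swap = L * |Pos|
  have hsum2 : ∑ s ∈ T, ((range L).filter fun k => rot k s ∈ Pos t L n).card
      = L * (Pos t L n).card := by
    have h1 : ∀ s ∈ T, ((range L).filter fun k => rot k s ∈ Pos t L n).card
        = ∑ k ∈ range L, if rot k s ∈ Pos t L n then 1 else 0 :=
      fun s _ => Finset.card_filter _ _
    rw [Finset.sum_congr rfl h1, Finset.sum_comm]
    have h2 : ∀ k ∈ range L, (∑ s ∈ T, if rot k s ∈ Pos t L n then 1 else 0)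
        = (Pos t L n).card := by
      intro k hk
      rw [Finset.mem_range] at hk
      rw [← Finset.card_filter]
      refine Finset.card_bij (fun s _ => rot k s) ?_ ?_ ?_
      · rintro s hs
        exact (Finset.mem_filter.mp hs).2
      · rintro s1 hs1 s2 hs2 heq
        have : rot (L - k) (rot k s1) = rot (L - k) (rot k s2) := by rw [heq]
        rwa [rot_rot hL, rot_rot hL, show L - k + k = L by omega, rot_L hL, rot_L hL]
          at this
      · rintro q hq
        refine ⟨rot (L - k) q, ?_, ?_⟩
        · rw [Finset.mem_filter]
          have hplug : rot k (rot (L - k) q) = q := by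
            rw [rot_rot hL, show k + (L - k) = L by omega, rot_L hL]
          refine ⟨?_, by rw [hplug]; exact hq⟩
          rw [hT, Finset.mem_filter]
          refine ⟨Finset.mem_univ _, ?_⟩
          rw [falseCnt_rot hL]
          exact (mem_Pos.mp hq).2
        · show rot k (rot (L - k) q) = q
          rw [rot_rot hL, show k + (L - k) = L by omega, rot_L hL]
    rw [Finset.sum_congr rfl h2, Finset.sum_const, Finset.card_range, smul_eq_mul]
  rw [hsum2] at hsum1
  calc (Pos t L n).card * L = L * (Pos t L n).card := Nat.mul_comm _ _
    _ = Nat.choose L n * (L - (t+1)*n) := hsum1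
    _ = (L - (t+1)*n) * Nat.choose L n := Nat.mul_comm _ _

/-- nonnegative words with n falses -/
noncomputable def NN (t L n : ℕ) : Finset (Fin L → Bool) :=
  univ.filter fun p => (∀ m, m ≤ L → 0 ≤ Sp t p m) ∧ falseCnt p = n

lemma mem_NN {n : ℕ} {p : Fin L → Bool} :
    p ∈ NN t L n ↔ (∀ m, m ≤ L → 0 ≤ Sp t p m) ∧ falseCnt p = n := by
  simp [NN]

lemma pext_cons_zero (b : Bool) (p : Fin L → Bool) :
    pext (Fin.cons b p : Fin (L + 1) → Bool) 0 = b := by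
  simp [pext]

lemma pext_cons_succ (b : Bool) (p : Fin L → Bool) (i : ℕ) :
    pext (Fin.cons b p : Fin (L + 1) → Bool) (i + 1) = pext p i := by
  by_cases h : i < L
  · rw [pext, dif_pos (by omega : i + 1 < L + 1), pext, dif_pos h]
    have : (⟨i + 1, by omega⟩ : Fin (L + 1)) = Fin.succ ⟨i, h⟩ := rfl
    rw [this, Fin.cons_succ]
  · rw [pext, dif_neg (by omega), pext, dif_neg h]

lemma Sp_cons (b : Bool) (p : Fin L → Bool) (m : ℕ) :
    Sp t (Fin.cons b p : Fin (L + 1) → Bool) (m + 1) = wt t b + Sp t p m := by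
  rw [Sp, Finset.sum_range_succ', pext_cons_zero]
  rw [Finset.sum_congr rfl (fun i _ => by rw [pext_cons_succ])]
  rw [add_comm]
  rfl

lemma falseCnt_cons_true (p : Fin L → Bool) :
    falseCnt (Fin.cons true p : Fin (L + 1) → Bool) = falseCnt p := by
  rw [falseCnt, Fin.sum_univ_succ]
  simp [falseCnt]

/-- bijection `Pos (L+1) ↔ NN L` by prepending an up-step -/
lemma card_Pos_succ (t L n : ℕ) : (Pos t (L + 1) n).card = (NN t L n).card := by
  classical
  refine (Finset.card_bij (fun p _ => (Fin.cons true p : Fin (L + 1) → Bool)) ?_ ?_ ?_).symm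
  · rintro p hp
    obtain ⟨hnn, hfc⟩ := mem_NN.mp hp
    rw [mem_Pos]
    refine ⟨fun m hm hmL => ?_, by rw [falseCnt_cons_true]; exact hfc⟩
    obtain ⟨m', rfl⟩ : ∃ m', m = m' + 1 := ⟨m - 1, by omega⟩
    rw [Sp_cons]
    have := hnn m' (by omega)
    have hwt : wt t true = 1 := rfl
    omega
  · rintro p1 hp1 p2 hp2 heq
    have := congrArg Fin.tail heq
    simpa [Fin.tail_cons] using this
  · rintro q hq
    obtain ⟨hpos, hfc⟩ := mem_Pos.mp hq
    have hq0 : q 0 = true := by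
      have h1 := hpos 1 one_pos (by omega)
      rw [Sp] at h1
      simp only [Finset.range_one, Finset.sum_singleton] at h1
      have : pext q 0 = q 0 := by simp [pext]
      rw [this] at h1
      exact wt_true_of_pos h1
    refine ⟨Fin.tail q, ?_, ?_⟩
    · rw [mem_NN]
      have hqc : (Fin.cons true (Fin.tail q) : Fin (L + 1) → Bool) = q := by
        rw [← hq0]; exact Fin.cons_self_tail q
      constructor
      · intro m hm
        have := hpos (m + 1) (by omega) (by omega)
        rw [← hqc, Sp_cons] at this
        have hwt : wt t true = 1 := rfl
        omega
      · rw [← falseCnt_cons_true (Fin.tail q), hqc]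
        exact hfc
    · show Fin.cons true (Fin.tail q) = q
      rw [← hq0]; exact Fin.cons_self_tail q

section Append
variable {A B : ℕ}

lemma pext_append_lt (p₁ : Fin A → Bool) (p₂ : Fin B → Bool) {i : ℕ} (h : i < A) :
    pext (Fin.append p₁ p₂) i = pext p₁ i := by
  rw [pext, dif_pos (by omega : i < A + B), pext, dif_pos h]
  have : (⟨i, by omega⟩ : Fin (A + B)) = Fin.castAdd B ⟨i, h⟩ := rfl
  rw [this, Fin.append_left]

lemma pext_append_add (p₁ : Fin A → Bool) (p₂ : Fin B → Bool) (i : ℕ) :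
    pext (Fin.append p₁ p₂) (A + i) = pext p₂ i := by
  by_cases h : i < B
  · rw [pext, dif_pos (by omega : A + i < A + B), pext, dif_pos h]
    have : (⟨A + i, by omega⟩ : Fin (A + B)) = Fin.natAdd A ⟨i, h⟩ := rfl
    rw [this, Fin.append_right]
  · rw [pext, dif_neg (by omega), pext, dif_neg h]

lemma Sp_append_le (p₁ : Fin A → Bool) (p₂ : Fin B → Bool) {m : ℕ} (h : m ≤ A) :
    Sp t (Fin.append p₁ p₂) m = Sp t p₁ m := by
  refine Finset.sum_congr rfl fun i hi => ?_
  rw [Finset.mem_range] at hi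
  rw [pext_append_lt _ _ (by omega)]

lemma Sp_append_add (p₁ : Fin A → Bool) (p₂ : Fin B → Bool) (m : ℕ) :
    Sp t (Fin.append p₁ p₂) (A + m) = Sp t p₁ A + Sp t p₂ m := by
  rw [Sp_add, Sp_append_le _ _ le_rfl]
  congr 1
  refine Finset.sum_congr rfl fun i _ => ?_
  rw [pext_append_add]

lemma falseCnt_append (p₁ : Fin A → Bool) (p₂ : Fin B → Bool) :
    falseCnt (Fin.append p₁ p₂) = falseCnt p₁ + falseCnt p₂ := by
  rw [falseCnt, Fin.sum_univ_add]
  congr 1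
  · exact Finset.sum_congr rfl fun i _ => by rw [Fin.append_left]
  · exact Finset.sum_congr rfl fun i _ => by rw [Fin.append_right]

/-- a `false` count is forced by a zero of `Sp` -/
lemma falseCnt_of_Sp_zero {a : ℕ} {p : Fin A → Bool} (hA : A = (t + 1) * a)
    (h : Sp t p A = 0) : falseCnt p = a := by
  rw [Sp_total] at h
  have hAz : (A : ℤ) = ((t : ℤ) + 1) * (a : ℤ) := by
    have : (A : ℤ) = (((t + 1) * a : ℕ) : ℤ) := by exact_mod_cast hA
    rw [this]; push_cast; ring
  have : ((t : ℤ) + 1) * (falseCnt p : ℤ) = ((t : ℤ) + 1) * (a : ℤ) := by linarith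
  have h2 : (falseCnt p : ℤ) = (a : ℤ) := by
    have ht1 : ((t : ℤ) + 1) ≠ 0 := by positivity
    exact mul_left_cancel₀ ht1 this
  exact_mod_cast h2

lemma Sp_zero_of_falseCnt {a : ℕ} {p : Fin A → Bool} (hA : A = (t + 1) * a)
    (h : falseCnt p = a) : Sp t p A = 0 := by
  rw [Sp_total, h, hA]
  push_cast
  ring

/-- SPLIT 1: paths touching zero at `A` split as products -/
lemma card_split (t A B a b : ℕ) (hA : A = (t + 1) * a) :
    ((NN t (A + B) (a + b)).filter fun p => Sp t p A = 0).card
      = (NN t A a).card * (NN t B b).card := by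
  classical
  rw [← Finset.card_product]
  refine Finset.card_bij
    (fun q _ => ((fun i : Fin A => q (Fin.castAdd B i)), (fun i : Fin B => q (Fin.natAdd A i))))
    ?_ ?_ ?_
  · rintro q hq
    rw [Finset.mem_filter] at hq
    obtain ⟨hqNN, hSpA⟩ := hq
    obtain ⟨hnn, hfc⟩ := mem_NN.mp hqNN
    set q1 := fun i : Fin A => q (Fin.castAdd B i) with hq1
    set q2 := fun i : Fin B => q (Fin.natAdd A i) with hq2
    have happ : Fin.append q1 q2 = q := Fin.append_castAdd_natAdd
    rw [Finset.mem_product]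
    have hSp1 : ∀ m, m ≤ A → Sp t q1 m = Sp t q m := by
      intro m hm
      rw [← happ, Sp_append_le _ _ hm]
    have hfc1 : falseCnt q1 = a := falseCnt_of_Sp_zero hA (by rw [hSp1 A le_rfl]; exact hSpA)
    have hfc2 : falseCnt q2 = b := by
      have := falseCnt_append q1 q2
      rw [happ, hfc] at this
      omega
    constructor
    · rw [mem_NN]
      exact ⟨fun m hm => by rw [hSp1 m hm]; exact hnn m (by omega), hfc1⟩
    · rw [mem_NN]
      refine ⟨fun m hm => ?_, hfc2⟩
      have hadd : Sp t q (A + m) = Sp t q1 A + Sp t q2 m := by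
        rw [← happ, Sp_append_add]
      have h1 := hnn (A + m) (by omega)
      rw [hSp1 A le_rfl] at hadd
      linarith [hSpA]
  · rintro q1 hq1 q2 hq2 heq
    have h1 : (fun i : Fin A => q1 (Fin.castAdd B i)) = fun i : Fin A => q2 (Fin.castAdd B i) :=
      congrArg Prod.fst heq
    have h2 : (fun i : Fin B => q1 (Fin.natAdd A i)) = fun i : Fin B => q2 (Fin.natAdd A i) :=
      congrArg Prod.snd heq
    rw [← Fin.append_castAdd_natAdd (f := q1), ← Fin.append_castAdd_natAdd (f := q2), h1, h2]
  · rintro ⟨p₁, p₂⟩ hp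
    rw [Finset.mem_product] at hp
    dsimp only at hp
    obtain ⟨hp1, hp2⟩ := hp
    obtain ⟨hnn1, hfc1⟩ := mem_NN.mp hp1
    obtain ⟨hnn2, hfc2⟩ := mem_NN.mp hp2
    refine ⟨Fin.append p₁ p₂, ?_, ?_⟩
    · rw [Finset.mem_filter]
      have hSpA : Sp t (Fin.append p₁ p₂) A = 0 := by
        rw [Sp_append_le _ _ le_rfl]
        exact Sp_zero_of_falseCnt hA hfc1
      refine ⟨?_, hSpA⟩
      rw [mem_NN]
      constructor
      · intro m hm
        by_cases hmA : m ≤ A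
        · rw [Sp_append_le _ _ hmA]
          exact hnn1 m hmA
        · obtain ⟨j, rfl⟩ : ∃ j, m = A + j := ⟨m - A, by omega⟩
          rw [Sp_append_add]
          have := hnn2 j (by omega)
          have := hnn1 A le_rfl
          omega
      · rw [falseCnt_append, hfc1, hfc2]
    · refine Prod.ext ?_ ?_
      · funext i; exact Fin.append_left p₁ p₂ i
      · funext i; exact Fin.append_right p₁ p₂ i
/-- SPLIT 2: decomposition at the last zero -/
lemma card_split2 (t A B a b : ℕ) (hA : A = (t + 1) * a) :
    ((NN t (A + B) (a + b)).filter fun p =>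
        Sp t p A = 0 ∧ ∀ j, A < j → j ≤ A + B → Sp t p j ≠ 0).card
      = (NN t A a).card * (Pos t B b).card := by
  classical
  rw [← Finset.card_product]
  refine Finset.card_bij
    (fun q _ => ((fun i : Fin A => q (Fin.castAdd B i)), (fun i : Fin B => q (Fin.natAdd A i))))
    ?_ ?_ ?_
  · rintro q hq
    rw [Finset.mem_filter] at hq
    obtain ⟨hqNN, hSpA, hlast⟩ := hq
    obtain ⟨hnn, hfc⟩ := mem_NN.mp hqNN
    set q1 := fun i : Fin A => q (Fin.castAdd B i) with hq1
    set q2 := fun i : Fin B => q (Fin.natAdd A i) with hq2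
    have happ : Fin.append q1 q2 = q := Fin.append_castAdd_natAdd
    rw [Finset.mem_product]
    have hSp1 : ∀ m, m ≤ A → Sp t q1 m = Sp t q m := by
      intro m hm
      rw [← happ, Sp_append_le _ _ hm]
    have hfc1 : falseCnt q1 = a := falseCnt_of_Sp_zero hA (by rw [hSp1 A le_rfl]; exact hSpA)
    have hfc2 : falseCnt q2 = b := by
      have := falseCnt_append q1 q2
      rw [happ, hfc] at this
      omega
    have hadd : ∀ m, Sp t q (A + m) = Sp t q2 m := by
      intro m
      have : Sp t q (A + m) = Sp t q1 A + Sp t q2 m := by rw [← happ, Sp_append_add]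
      rw [hSp1 A le_rfl] at this
      rw [this, hSpA]
      ring
    constructor
    · rw [mem_NN]
      exact ⟨fun m hm => by rw [hSp1 m hm]; exact hnn m (by omega), hfc1⟩
    · rw [mem_Pos]
      refine ⟨fun m hm hmB => ?_, hfc2⟩
      have h1 := hnn (A + m) (by omega)
      have h2 := hlast (A + m) (by omega) (by omega)
      rw [hadd m] at h1 h2
      exact lt_of_le_of_ne h1 (Ne.symm h2)
  · rintro q1 hq1 q2 hq2 heq
    have h1 : (fun i : Fin A => q1 (Fin.castAdd B i)) = fun i : Fin A => q2 (Fin.castAdd B i) :=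
      congrArg Prod.fst heq
    have h2 : (fun i : Fin B => q1 (Fin.natAdd A i)) = fun i : Fin B => q2 (Fin.natAdd A i) :=
      congrArg Prod.snd heq
    rw [← Fin.append_castAdd_natAdd (f := q1), ← Fin.append_castAdd_natAdd (f := q2), h1, h2]
  · rintro ⟨p₁, p₂⟩ hp
    rw [Finset.mem_product] at hp
    dsimp only at hp
    obtain ⟨hp1, hp2⟩ := hp
    obtain ⟨hnn1, hfc1⟩ := mem_NN.mp hp1
    obtain ⟨hpos2, hfc2⟩ := mem_Pos.mp hp2
    have hSpA : Sp t (Fin.append p₁ p₂) A = 0 := by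
      rw [Sp_append_le _ _ le_rfl]
      exact Sp_zero_of_falseCnt hA hfc1
    have hadd : ∀ m, Sp t (Fin.append p₁ p₂) (A + m) = Sp t p₂ m := by
      intro m
      rw [Sp_append_add, Sp_zero_of_falseCnt hA hfc1, zero_add]
    refine ⟨Fin.append p₁ p₂, ?_, ?_⟩
    · rw [Finset.mem_filter]
      refine ⟨?_, hSpA, fun j hj hjAB => ?_⟩
      · rw [mem_NN]
        constructor
        · intro m hm
          by_cases hmA : m ≤ A
          · rw [Sp_append_le _ _ hmA]
            exact hnn1 m hmA
          · obtain ⟨j, rfl⟩ : ∃ j, m = A + j := ⟨m - A, by omega⟩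
            rw [hadd]
            have := hpos2 j (by omega) (by omega)
            omega
        · rw [falseCnt_append, hfc1, hfc2]
      · obtain ⟨j', rfl⟩ : ∃ j', j = A + j' := ⟨j - A, by omega⟩
        rw [hadd]
        have := hpos2 j' (by omega) (by omega)
        omega
    · refine Prod.ext ?_ ?_
      · funext i; exact Fin.append_left p₁ p₂ i
      · funext i; exact Fin.append_right p₁ p₂ i

end Append

/-- down-step count among first m letters (padding counts as up) -/
def dCnt {N : ℕ} (p : Fin N → Bool) (m : ℕ) : ℕ :=
  ∑ i ∈ range m, (if pext p i = false then 1 else 0)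

def uCnt {N : ℕ} (p : Fin N → Bool) (m : ℕ) : ℕ :=
  ∑ i ∈ range m, (if pext p i = true then 1 else 0)

lemma uCnt_add_dCnt {N : ℕ} (p : Fin N → Bool) (m : ℕ) :
    uCnt p m + dCnt p m = m := by
  rw [uCnt, dCnt, ← Finset.sum_add_distrib]
  have : ∀ i ∈ range m, ((if pext p i = true then 1 else 0) +
      (if pext p i = false then 1 else 0) : ℕ) = 1 := by
    intro i _
    cases h : pext p i <;> simp
  rw [Finset.sum_congr rfl this, Finset.sum_const, Finset.card_range, smul_eq_mul, mul_one]

lemma Sp_eq_cnt {N : ℕ} (p : Fin N → Bool) (m : ℕ) :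
    Sp t p m = (uCnt p m : ℤ) - (t : ℤ) * (dCnt p m : ℤ) := by
  have h1 : ∀ i ∈ range m, wt t (pext p i) =
      ((if pext p i = true then (1:ℤ) else 0) - (t:ℤ) * (if pext p i = false then 1 else 0)) :=
    fun i _ => wt_eq t _
  rw [Sp, Finset.sum_congr rfl h1, Finset.sum_sub_distrib, ← Finset.mul_sum, uCnt, dCnt]
  push_cast
  rfl

lemma dvd_of_Sp_eq_zero {N : ℕ} {p : Fin N → Bool} {m : ℕ} (h : Sp t p m = 0) :
    (t + 1) ∣ m := by
  have h1 := Sp_eq_cnt (t := t) p m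
  have h2 := uCnt_add_dCnt p m
  rw [h] at h1
  have h3 : (uCnt p m : ℤ) = (t : ℤ) * (dCnt p m : ℤ) := by linarith
  have h4 : uCnt p m = t * dCnt p m := by exact_mod_cast h3
  have h5 : (t + 1) * dCnt p m = t * dCnt p m + dCnt p m := by ring
  exact ⟨dCnt p m, by omega⟩

/-- transport of fibered cardinalities along index equalities -/
lemma card_fiber_congr {t L L' n n' : ℕ} (hL : L = L') (hn : n = n') (m : ℕ) :
    ((NN t L n).filter fun p => Sp t p m = 0 ∧ ∀ j, m < j → j ≤ L → Sp t p j ≠ 0).card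
      = ((NN t L' n').filter fun p =>
          Sp t p m = 0 ∧ ∀ j, m < j → j ≤ L' → Sp t p j ≠ 0).card := by
  subst hL; subst hn; rfl

lemma card_fiber_congr2 {t L L' n n' : ℕ} (hL : L = L') (hn : n = n') (m : ℕ) :
    ((NN t L n).filter fun p => Sp t p m = 0).card
      = ((NN t L' n').filter fun p => Sp t p m = 0).card := by
  subst hL; subst hn; rfl

/-- CONVOLUTION: decomposition of nonneg words ending at height 1 at the last zero -/
lemma NN_card_conv (t n : ℕ) (ht : 1 ≤ t) :
    (NN t ((t + 1) * n + 1) n).card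
      = ∑ k ∈ range (n + 1),
          (NN t ((t + 1) * k) k).card * (NN t ((t + 1) * (n - k)) (n - k)).card := by
  classical
  set L := (t + 1) * n + 1 with hLdef
  -- last zero of p
  have hlzne : ∀ p : Fin L → Bool, ((range (L + 1)).filter fun m => Sp t p m = 0).Nonempty :=
    fun p => ⟨0, by simp⟩
  set lz := fun p : Fin L → Bool => ((range (L + 1)).filter fun m => Sp t p m = 0).max' (hlzne p)
    with hlz
  have hmem : ∀ p ∈ NN t L n, lz p ∈ range (L + 1) := by
    intro p _
    have := Finset.max'_mem _ (hlzne p)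
    exact (Finset.mem_filter.mp this).1
  rw [Finset.card_eq_sum_card_fiberwise hmem]
  -- identify fibers
  have hfib : ∀ m ∈ range (L + 1), ((NN t L n).filter fun p => lz p = m).card
      = ((NN t L n).filter fun p =>
          Sp t p m = 0 ∧ ∀ j, m < j → j ≤ L → Sp t p j ≠ 0).card := by
    intro m hm
    rw [Finset.mem_range] at hm
    congr 1
    refine Finset.filter_congr fun p hp => ?_
    constructor
    · rintro rfl
      have h1 : lz p ∈ (range (L + 1)).filter fun m => Sp t p m = 0 :=
        Finset.max'_mem _ (hlzne p)
      rw [Finset.mem_filter] at h1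
      refine ⟨h1.2, fun j hj hjL => ?_⟩
      intro hSpj
      have hjmem : j ∈ (range (L + 1)).filter fun m => Sp t p m = 0 := by
        rw [Finset.mem_filter, Finset.mem_range]
        exact ⟨by omega, hSpj⟩
      have hle : j ≤ lz p := Finset.le_max' _ j hjmem
      omega
    · rintro ⟨hSpm, hafter⟩
      have h1 : m ∈ (range (L + 1)).filter fun m => Sp t p m = 0 := by
        rw [Finset.mem_filter, Finset.mem_range]
        exact ⟨by omega, hSpm⟩
      have h2 : m ≤ lz p := Finset.le_max' _ m h1
      have h3 : lz p ∈ (range (L + 1)).filter fun m => Sp t p m = 0 :=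
        Finset.max'_mem _ (hlzne p)
      rw [Finset.mem_filter, Finset.mem_range] at h3
      by_contra hne
      have : m < lz p := by omega
      exact hafter (lz p) this (by omega) h3.2
  rw [Finset.sum_congr rfl hfib]
  -- fibers vanish off multiples of (t+1)
  have hvanish : ∀ m ∈ range (L + 1), ¬ ((t + 1) ∣ m) →
      ((NN t L n).filter fun p =>
        Sp t p m = 0 ∧ ∀ j, m < j → j ≤ L → Sp t p j ≠ 0).card = 0 := by
    intro m _ hdvd
    rw [Finset.card_eq_zero]
    rw [Finset.filter_eq_empty_iff]
    rintro p _ ⟨hSpm, _⟩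
    exact hdvd (dvd_of_Sp_eq_zero hSpm)
  -- restrict to multiples and reindex
  rw [← Finset.sum_filter_of_ne (by
    intro m hm hne
    by_contra hdvd
    exact hne (hvanish m hm hdvd))]
  refine Finset.sum_nbij' (i := fun m => m / (t + 1)) (j := fun k => (t + 1) * k)
    ?_ ?_ ?_ ?_ ?_
  · intro m hm
    rw [Finset.mem_filter, Finset.mem_range] at hm
    obtain ⟨hmL, k, rfl⟩ := hm
    rw [Finset.mem_range]
    rw [Nat.mul_div_cancel_left k (by omega : 0 < t + 1)]
    by_contra hc
    have h5 := Nat.mul_le_mul_left (t + 1) (show n + 1 ≤ k by omega)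
    have h6 : (t + 1) * (n + 1) = (t + 1) * n + (t + 1) := by ring
    omega
  · intro k hk
    rw [Finset.mem_range] at hk
    rw [Finset.mem_filter, Finset.mem_range]
    refine ⟨?_, ⟨k, rfl⟩⟩
    have h5 : (t + 1) * k ≤ (t + 1) * n := Nat.mul_le_mul_left _ (by omega)
    omega
  · intro m hm
    rw [Finset.mem_filter] at hm
    obtain ⟨_, k, rfl⟩ := hm
    rw [Nat.mul_div_cancel_left k (by omega : 0 < t + 1)]
  · intro k _
    rw [Nat.mul_div_cancel_left k (by omega : 0 < t + 1)]
  · intro m hm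
    rw [Finset.mem_filter, Finset.mem_range] at hm
    obtain ⟨hmL, k, rfl⟩ := hm
    have hk : k ≤ n := by
      by_contra hc
      have h5 := Nat.mul_le_mul_left (t + 1) (show n + 1 ≤ k by omega)
      have h6 : (t + 1) * (n + 1) = (t + 1) * n + (t + 1) := by ring
      omega
    rw [Nat.mul_div_cancel_left k (by omega : 0 < t + 1)]
    have hsplitL : (t + 1) * k + (t + 1) * (n - k) = (t + 1) * n := by
      rw [← Nat.mul_add]
      congr 1
      omega
    -- fiber card = product of counts
    rw [card_fiber_congr (t := t)
      (show L = (t + 1) * k + ((t + 1) * (n - k) + 1) by omega)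
      (show n = k + (n - k) by omega) ((t + 1) * k)]
    rw [card_split2 t ((t + 1) * k) ((t + 1) * (n - k) + 1) k (n - k) rfl, card_Pos_succ]

/-- RETURNS: sum over paths of the number of interior zeros -/
lemma returns_sum (t n : ℕ) :
    ∑ p ∈ NN t ((t + 1) * n) n, ((Ioo 0 ((t + 1) * n)).filter fun m => Sp t p m = 0).card
      = ∑ k ∈ Ico 1 n,
          (NN t ((t + 1) * k) k).card * (NN t ((t + 1) * (n - k)) (n - k)).card := by
  classical
  set N := (t + 1) * n with hNdef
  have h1 : ∀ p ∈ NN t N n, ((Ioo 0 N).filter fun m => Sp t p m = 0).card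
      = ∑ m ∈ Ioo 0 N, if Sp t p m = 0 then 1 else 0 :=
    fun p _ => Finset.card_filter _ _
  rw [Finset.sum_congr rfl h1, Finset.sum_comm]
  have h2 : ∀ m ∈ Ioo 0 N, (∑ p ∈ NN t N n, if Sp t p m = 0 then 1 else 0)
      = ((NN t N n).filter fun p => Sp t p m = 0).card :=
    fun m _ => (Finset.card_filter _ _).symm
  rw [Finset.sum_congr rfl h2]
  have hvanish : ∀ m ∈ Ioo 0 N, ¬ ((t + 1) ∣ m) →
      ((NN t N n).filter fun p => Sp t p m = 0).card = 0 := by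
    intro m _ hdvd
    rw [Finset.card_eq_zero, Finset.filter_eq_empty_iff]
    rintro p _ hSpm
    exact hdvd (dvd_of_Sp_eq_zero hSpm)
  rw [← Finset.sum_filter_of_ne (by
    intro m hm hne
    by_contra hdvd
    exact hne (hvanish m hm hdvd))]
  refine Finset.sum_nbij' (i := fun m => m / (t + 1)) (j := fun k => (t + 1) * k)
    ?_ ?_ ?_ ?_ ?_
  · intro m hm
    rw [Finset.mem_filter, Finset.mem_Ioo] at hm
    obtain ⟨⟨hm0, hmN⟩, k, rfl⟩ := hm
    rw [Finset.mem_Ico]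
    rw [Nat.mul_div_cancel_left k (by omega : 0 < t + 1)]
    constructor
    · rcases Nat.eq_zero_or_pos k with rfl | h
      · omega
      · omega
    · by_contra hc
      have h5 := Nat.mul_le_mul_left (t + 1) (show n ≤ k by omega)
      omega
  · intro k hk
    rw [Finset.mem_Ico] at hk
    rw [Finset.mem_filter, Finset.mem_Ioo]
    refine ⟨⟨?_, ?_⟩, ⟨k, rfl⟩⟩
    · have : 1 * 1 ≤ (t + 1) * k := Nat.mul_le_mul (by omega) (by omega)
      omega
    · have h5 : (t + 1) * k < (t + 1) * n := by
        have h7 := Nat.mul_le_mul_left (t + 1) (show k + 1 ≤ n by omega)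
        have h6 : (t + 1) * (k + 1) = (t + 1) * k + (t + 1) := by ring
        omega
      omega
  · intro m hm
    rw [Finset.mem_filter] at hm
    obtain ⟨_, k, rfl⟩ := hm
    rw [Nat.mul_div_cancel_left k (by omega : 0 < t + 1)]
  · intro k _
    rw [Nat.mul_div_cancel_left k (by omega : 0 < t + 1)]
  · intro m hm
    rw [Finset.mem_filter, Finset.mem_Ioo] at hm
    obtain ⟨⟨hm0, hmN⟩, k, rfl⟩ := hm
    have hk : k ≤ n := by
      by_contra hc
      have h5 := Nat.mul_le_mul_left (t + 1) (show n ≤ k by omega)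
      omega
    rw [Nat.mul_div_cancel_left k (by omega : 0 < t + 1)]
    have hsplitL : (t + 1) * k + (t + 1) * (n - k) = (t + 1) * n := by
      rw [← Nat.mul_add]
      congr 1
      omega
    rw [card_fiber_congr2 (t := t)
      (show N = (t + 1) * k + (t + 1) * (n - k) by omega)
      (show n = k + (n - k) by omega) ((t + 1) * k)]
    exact card_split t ((t + 1) * k) ((t + 1) * (n - k)) k (n - k) rfl

end GD

namespace GD

variable {t : ℕ}

lemma count_eq {N : ℕ} (p : Fin N → Bool) (b : Bool) {m : ℕ} (hm : m ≤ N) :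
    (Finset.univ.filter fun i : Fin N => (i : ℕ) < m ∧ p i = b).card
      = ((range m).filter fun i => pext p i = b).card := by
  refine Finset.card_bij (fun i _ => (i : ℕ)) ?_ ?_ ?_
  · rintro i hi
    rw [Finset.mem_filter] at hi
    obtain ⟨_, him, hib⟩ := hi
    rw [Finset.mem_filter, Finset.mem_range]
    refine ⟨him, ?_⟩
    rw [pext, dif_pos i.isLt]
    simpa using hib
  · rintro i _ j _ hij
    exact Fin.ext hij
  · rintro j hj
    rw [Finset.mem_filter, Finset.mem_range] at hj
    obtain ⟨hjm, hjb⟩ := hj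
    have hjN : j < N := by omega
    refine ⟨⟨j, hjN⟩, ?_, rfl⟩
    rw [Finset.mem_filter]
    refine ⟨Finset.mem_univ _, hjm, ?_⟩
    rw [pext, dif_pos hjN] at hjb
    exact hjb

lemma upCount_eq {N : ℕ} (p : Fin N → Bool) {m : ℕ} (hm : m ≤ N) :
    upCount p m = uCnt p m := by
  rw [upCount, count_eq p true hm, uCnt, Finset.card_filter]

lemma downCount_eq {N : ℕ} (p : Fin N → Bool) {m : ℕ} (hm : m ≤ N) :
    downCount p m = dCnt p m := by
  rw [downCount, count_eq p false hm, dCnt, Finset.card_filter]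

lemma upCount_const {N : ℕ} (p : Fin N → Bool) {m : ℕ} (hm : N ≤ m) :
    upCount p m = upCount p N := by
  rw [upCount, upCount]
  congr 1
  refine Finset.filter_congr fun i _ => ?_
  have h1 : (i : ℕ) < m := by have := i.isLt; omega
  have h2 : (i : ℕ) < N := i.isLt
  simp [h1, h2]

lemma downCount_const {N : ℕ} (p : Fin N → Bool) {m : ℕ} (hm : N ≤ m) :
    downCount p m = downCount p N := by
  rw [downCount, downCount]
  congr 1
  refine Finset.filter_congr fun i _ => ?_
  have h1 : (i : ℕ) < m := by have := i.isLt; omega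
  have h2 : (i : ℕ) < N := i.isLt
  simp [h1, h2]

lemma falseCnt_eq_dCnt {N : ℕ} (p : Fin N → Bool) : falseCnt p = dCnt p N := by
  rw [falseCnt, dCnt, ← Fin.sum_univ_eq_sum_range (fun i => if pext p i = false then 1 else 0) N]
  refine Finset.sum_congr rfl fun i _ => ?_
  rw [pext, dif_pos i.isLt]

/-- the original Dyck-path set is `NN` -/
lemma genDyck_eq_NN (t n : ℕ) : genDyckPaths t n = NN t ((t + 1) * n) n := by
  classical
  ext p
  rw [genDyckPaths, Finset.mem_filter, mem_NN]
  have hNn : (t + 1) * n = t * n + n := by ring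
  have hcnt : ∀ m, m ≤ (t + 1) * n →
      (upCount p m : ℤ) - (t : ℤ) * (downCount p m : ℤ) = Sp t p m := by
    intro m hm
    rw [upCount_eq p hm, downCount_eq p hm, Sp_eq_cnt]
  constructor
  · rintro ⟨_, hmono, hend⟩
    have hfc : falseCnt p = n := by
      have h1 : upCount p ((t + 1) * n) + downCount p ((t + 1) * n) = (t + 1) * n := by
        rw [upCount_eq p le_rfl, downCount_eq p le_rfl]
        exact uCnt_add_dCnt p _
      have h3 : (t + 1) * downCount p ((t + 1) * n)
          = t * downCount p ((t + 1) * n) + downCount p ((t + 1) * n) := by ring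
      have h2 : (t + 1) * downCount p ((t + 1) * n) = (t + 1) * n := by omega
      have h4 : downCount p ((t + 1) * n) = n := Nat.eq_of_mul_eq_mul_left (by omega) h2
      rw [falseCnt_eq_dCnt, ← downCount_eq p le_rfl, h4]
    refine ⟨fun m hm => ?_, hfc⟩
    rw [← hcnt m hm]
    have := hmono m
    have h5 : ((t * downCount p m : ℕ) : ℤ) ≤ ((upCount p m : ℕ) : ℤ) := by exact_mod_cast this
    push_cast at h5
    linarith
  · rintro ⟨hnn, hfc⟩
    have hend : upCount p ((t + 1) * n) = t * downCount p ((t + 1) * n) := by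
      have h1 : Sp t p ((t + 1) * n) = 0 := Sp_zero_of_falseCnt rfl hfc
      have h2 := hcnt ((t + 1) * n) le_rfl
      rw [h1] at h2
      have h3 : (upCount p ((t + 1) * n) : ℤ)
          = (t : ℤ) * (downCount p ((t + 1) * n) : ℤ) := by linarith
      exact_mod_cast h3
    refine ⟨Finset.mem_univ _, fun m => ?_, hend⟩
    by_cases hm : m ≤ (t + 1) * n
    · have h1 := hnn m hm
      rw [← hcnt m hm] at h1
      have h2 : ((t * downCount p m : ℕ) : ℤ) ≤ ((upCount p m : ℕ) : ℤ) := by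
        push_cast
        linarith
      exact_mod_cast h2
    · rw [upCount_const p (by omega : (t + 1) * n ≤ m),
        downCount_const p (by omega : (t + 1) * n ≤ m)]
      have h1 := hnn ((t + 1) * n) le_rfl
      rw [← hcnt ((t + 1) * n) le_rfl] at h1
      have h2 : ((t * downCount p ((t + 1) * n) : ℕ) : ℤ)
          ≤ ((upCount p ((t + 1) * n) : ℕ) : ℤ) := by
        push_cast
        linarith
      exact_mod_cast h2

lemma genReturns_eq (t n : ℕ) (p : Fin ((t + 1) * n) → Bool) :
    genReturns t p = ((Ioo 0 ((t + 1) * n)).filter fun m => Sp t p m = 0).card := by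
  rw [genReturns]
  congr 1
  refine Finset.filter_congr fun m hm => ?_
  rw [Finset.mem_Ioo] at hm
  have hmN : m ≤ (t + 1) * n := by omega
  constructor
  · intro h
    rw [Sp_eq_cnt, ← upCount_eq p hmN, ← downCount_eq p hmN, h]
    push_cast
    ring
  · intro h
    rw [Sp_eq_cnt, ← upCount_eq p hmN, ← downCount_eq p hmN] at h
    have h2 : (upCount p m : ℤ) = (t : ℤ) * (downCount p m : ℤ) := by linarith
    exact_mod_cast h2

lemma NN_zero_card (t : ℕ) : (NN t 0 0).card = 1 := by
  classical
  rw [NN]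
  rw [Finset.filter_true_of_mem (fun p _ => ?_)]
  · simp
  · constructor
    · intro m hm
      obtain rfl : m = 0 := by omega
      simp
    · rw [falseCnt]
      simp

end GD

/-- The number of generalized `t`-Dyck paths from `(0,0)` to `((t+1)n,0)` is the
Fuss–Catalan number `(1/(tn+1)) binom((t+1)n, n)`, and the expected number of
nontrivial returns of a uniformly random such path equals `(2n-2)/(tn+2)`. -/
theorem genDyck_count_and_expected_returns (t n : ℕ) (ht : 1 ≤ t) (hn : 1 ≤ n) :
    ((genDyckPaths t n).card : ℚ)
        = (((t + 1) * n).choose n : ℚ) / ((t : ℚ) * (n : ℚ) + 1)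
    ∧ (∑ p ∈ genDyckPaths t n, (genReturns t p : ℚ)) / ((genDyckPaths t n).card : ℚ)
        = (2 * (n : ℚ) - 2) / ((t : ℚ) * (n : ℚ) + 2) := by
  classical
  have hNn : (t + 1) * n = t * n + n := by ring
  have hnN : n ≤ (t + 1) * n := by
    have : 1 * n ≤ (t + 1) * n := Nat.mul_le_mul_right n (by omega)
    omega
  -- ℕ counting fact for the Fuss–Catalan number
  have hD1 : (GD.NN t ((t + 1) * n) n).card * ((t + 1) * n + 1)
      = Nat.choose ((t + 1) * n + 1) n := by
    have h := GD.Pos_card_mul t ((t + 1) * n + 1) n (by omega)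
    rw [show (t + 1) * n + 1 - (t + 1) * n = 1 by omega, one_mul] at h
    rw [← GD.card_Pos_succ t ((t + 1) * n) n]
    exact h
  -- ℕ counting fact for the convolution
  have hConv : (∑ k ∈ Finset.range (n + 1),
        (GD.NN t ((t + 1) * k) k).card * (GD.NN t ((t + 1) * (n - k)) (n - k)).card)
        * ((t + 1) * n + 2) = 2 * Nat.choose ((t + 1) * n + 2) n := by
    rw [← GD.NN_card_conv t n ht, ← GD.card_Pos_succ t ((t + 1) * n + 1) n]
    have h := GD.Pos_card_mul t ((t + 1) * n + 1 + 1) n (by omega)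
    rw [show (t + 1) * n + 1 + 1 - (t + 1) * n = 2 by omega] at h
    exact h
  -- binomial identities
  have hsymm1 : Nat.choose ((t + 1) * n + 1) n = Nat.choose ((t + 1) * n + 1) (t * n + 1) := by
    rw [← Nat.choose_symm (show n ≤ (t + 1) * n + 1 by omega)]
    congr 1
    omega
  have hsymm0 : Nat.choose ((t + 1) * n) n = Nat.choose ((t + 1) * n) (t * n) := by
    rw [← Nat.choose_symm (show n ≤ (t + 1) * n by omega)]
    congr 1
    omega
  have hsymm2 : Nat.choose ((t + 1) * n + 2) n = Nat.choose ((t + 1) * n + 2) (t * n + 2) := by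
    rw [← Nat.choose_symm (show n ≤ (t + 1) * n + 2 by omega)]
    congr 1
    omega
  have hid1 : (t * n + 1) * Nat.choose ((t + 1) * n + 1) n
      = ((t + 1) * n + 1) * Nat.choose ((t + 1) * n) n := by
    have e3 := Nat.add_one_mul_choose_eq ((t + 1) * n) (t * n)
    rw [hsymm1, hsymm0, Nat.mul_comm]
    exact e3.symm
  have hid2 : (t * n + 2) * Nat.choose ((t + 1) * n + 2) n
      = ((t + 1) * n + 2) * Nat.choose ((t + 1) * n + 1) n := by
    have e3 := Nat.add_one_mul_choose_eq ((t + 1) * n + 1) (t * n + 1)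
    rw [hsymm2, hsymm1, Nat.mul_comm]
    exact e3.symm
  -- returns sum in ℕ
  have hRetN : (∑ p ∈ genDyckPaths t n, genReturns t p)
      = ∑ k ∈ Finset.Ico 1 n,
          (GD.NN t ((t + 1) * k) k).card * (GD.NN t ((t + 1) * (n - k)) (n - k)).card := by
    rw [GD.genDyck_eq_NN]
    rw [Finset.sum_congr rfl (fun p _ => GD.genReturns_eq t n p)]
    exact GD.returns_sum t n
  -- split the convolution sum
  have hsplitSum : (∑ k ∈ Finset.range (n + 1),
        (GD.NN t ((t + 1) * k) k).card * (GD.NN t ((t + 1) * (n - k)) (n - k)).card)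
      = (GD.NN t ((t + 1) * n) n).card
        + (∑ k ∈ Finset.Ico 1 n,
          (GD.NN t ((t + 1) * k) k).card * (GD.NN t ((t + 1) * (n - k)) (n - k)).card)
        + (GD.NN t ((t + 1) * n) n).card := by
    rw [Finset.range_eq_Ico, Finset.sum_eq_sum_Ico_succ_bot (by omega : 0 < n + 1),
      Finset.sum_Ico_succ_top (by omega : 1 ≤ n)]
    have hf0 : (GD.NN t ((t + 1) * 0) 0).card * (GD.NN t ((t + 1) * (n - 0)) (n - 0)).card
        = (GD.NN t ((t + 1) * n) n).card := by
      have h0 : (GD.NN t ((t + 1) * 0) 0).card = 1 := GD.NN_zero_card t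
      rw [h0, one_mul, Nat.sub_zero]
    have hfn : (GD.NN t ((t + 1) * n) n).card * (GD.NN t ((t + 1) * (n - n)) (n - n)).card
        = (GD.NN t ((t + 1) * n) n).card := by
      rw [Nat.sub_self, Nat.mul_zero]
      have h0 : (GD.NN t 0 0).card = 1 := GD.NN_zero_card t
      rw [h0, mul_one]
    rw [hf0, hfn]
    ring
  -- now pass to ℚ
  set Dq : ℚ := ((GD.NN t ((t + 1) * n) n).card : ℚ) with hDq
  set Iq : ℚ := ((∑ k ∈ Finset.Ico 1 n,
      (GD.NN t ((t + 1) * k) k).card * (GD.NN t ((t + 1) * (n - k)) (n - k)).card : ℕ) : ℚ)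
    with hIq
  set A : ℚ := (((t + 1) * n : ℕ) : ℚ) with hA
  set c0 : ℚ := ((Nat.choose ((t + 1) * n) n : ℕ) : ℚ) with hc0
  set c1 : ℚ := ((Nat.choose ((t + 1) * n + 1) n : ℕ) : ℚ) with hc1
  set c2 : ℚ := ((Nat.choose ((t + 1) * n + 2) n : ℕ) : ℚ) with hc2
  have e1 : Dq * (A + 1) = c1 := by
    rw [hDq, hA, hc1]
    exact_mod_cast hD1
  have e2 : (Dq + Iq + Dq) * (A + 2) = 2 * c2 := by
    rw [hDq, hIq, hA, hc2]
    rw [hsplitSum] at hConv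
    exact_mod_cast hConv
  have e3 : ((t : ℚ) * n + 1) * c1 = (A + 1) * c0 := by
    rw [hc1, hA, hc0]
    exact_mod_cast hid1
  have e4 : ((t : ℚ) * n + 2) * c2 = (A + 2) * c1 := by
    rw [hc2, hA, hc1]
    exact_mod_cast hid2
  have e5 : A = (t : ℚ) * n + n := by
    rw [hA]
    push_cast
    ring
  have hAnn : (0 : ℚ) ≤ A := by rw [hA]; positivity
  have hA1 : (A + 1) ≠ 0 := by positivity
  have hA2 : (A + 2) ≠ 0 := by positivity
  have htn0 : (0 : ℚ) ≤ (t : ℚ) * n := by positivity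
  have hden1 : ((t : ℚ) * n + 1) ≠ 0 := by positivity
  have hden2 : ((t : ℚ) * n + 2) ≠ 0 := by positivity
  have hc1pos : c1 ≠ 0 := by
    rw [hc1]
    have := Nat.choose_pos (show n ≤ (t + 1) * n + 1 by omega)
    positivity
  have hDqne : Dq ≠ 0 := by
    intro h
    rw [h, zero_mul] at e1
    exact hc1pos e1.symm
  constructor
  · -- first claim
    rw [GD.genDyck_eq_NN, ← hDq, eq_div_iff hden1]
    have h6 : (Dq * ((t : ℚ) * n + 1)) * (A + 1) = c0 * (A + 1) := by
      linear_combination ((t : ℚ) * n + 1) * e1 + e3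
    exact mul_right_cancel₀ hA1 h6
  · -- second claim
    have hnum : (∑ p ∈ genDyckPaths t n, (genReturns t p : ℚ)) = Iq := by
      rw [hIq, ← hRetN, Nat.cast_sum]
    rw [hnum, GD.genDyck_eq_NN, ← hDq, div_eq_div_iff hDqne hden2]
    have key2 : (Iq * ((t : ℚ) * n + 2)) * (A + 2) = ((2 * (n : ℚ) - 2) * Dq) * (A + 2) := by
      linear_combination ((t : ℚ) * n + 2) * e2 + 2 * e4 - 2 * (A + 2) * e1
        + 2 * (A + 2) * Dq * e5
    exact mul_right_cancel₀ hA2 key2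
end
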